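/- arXiv:0902.3490 — 6 statements merged into one kernel-verified Lean document; each statement's English description precedes it below -/
import Mathlib

section
/- For α ∈ ℂ, the function K_α(x) = (α + x/|x|² - iα x/|x|)·θ_α(x), with θ_α(x) = -e^{iα|x|}/(4π|x|), satisfies (D + α)K_α = 0 pointwise on ℝ³ \ {0}. -/
noncomputable section

/-- ℝ³ -/
abbrev V3 := Fin 3 → ℝ
/-- Complex quaternions ℍ(ℂ) -/
abbrev HC := Quaternion ℂ

/-- partial derivative ∂ₖ of a function on ℝ³ -/
noncomputable def pd {E : Type*} [NormedAddCommGroup E] [NormedSpace ℝ E]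
    (k : Fin 3) (g : V3 → E) (x : V3) : E :=
  fderiv ℝ g x (Pi.single k 1)

noncomputable def grad {E : Type*} [NormedAddCommGroup E] [NormedSpace ℝ E]
    (g : V3 → E) (x : V3) : Fin 3 → E := fun k => pd k g x

noncomputable def dvg {E : Type*} [NormedAddCommGroup E] [NormedSpace ℝ E]
    (F : V3 → Fin 3 → E) (x : V3) : E :=
  pd 0 (fun y => F y 0) x + pd 1 (fun y => F y 1) x + pd 2 (fun y => F y 2) x

noncomputable def rot {E : Type*} [NormedAddCommGroup E] [NormedSpace ℝ E]
    (F : V3 → Fin 3 → E) (x : V3) : Fin 3 → E :=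
  ![pd 1 (fun y => F y 2) x - pd 2 (fun y => F y 1) x,
    pd 2 (fun y => F y 0) x - pd 0 (fun y => F y 2) x,
    pd 0 (fun y => F y 1) x - pd 1 (fun y => F y 0) x]

/-- scalar Laplacian -/
noncomputable def lapS {E : Type*} [NormedAddCommGroup E] [NormedSpace ℝ E]
    (g : V3 → E) (x : V3) : E :=
  pd 0 (pd 0 g) x + pd 1 (pd 1 g) x + pd 2 (pd 2 g) x

/-- purely vectorial quaternion from a ℂ³ vector -/
def vecq (v : Fin 3 → ℂ) : HC := ⟨0, v 0, v 1, v 2⟩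
/-- scalar quaternion -/
def scq (a : ℂ) : HC := ⟨a, 0, 0, 0⟩

def e1 : HC := ⟨0,1,0,0⟩
def e2 : HC := ⟨0,0,1,0⟩
def e3 : HC := ⟨0,0,0,1⟩

/-- vector part of a quaternion, as a ℂ³ vector -/
def vecPart (a : HC) : Fin 3 → ℂ := ![a.imI, a.imJ, a.imK]

/-- quaternionic conjugation C_H -/
def qconj (a : HC) : HC := ⟨a.re, -a.imI, -a.imJ, -a.imK⟩

/-- componentwise partial derivative of an ℍ(ℂ)-valued function -/
noncomputable def qpd (k : Fin 3) (F : V3 → HC) (x : V3) : HC :=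
  ⟨pd k (fun y => (F y).re) x, pd k (fun y => (F y).imI) x,
   pd k (fun y => (F y).imJ) x, pd k (fun y => (F y).imK) x⟩

/-- The Moisil–Teodorescu (Dirac) operator D = Σₖ iₖ∂ₖ -/
noncomputable def Dq (F : V3 → HC) (x : V3) : HC :=
  e1 * qpd 0 F x + e2 * qpd 1 F x + e3 * qpd 2 F x

/-- componentwise Laplacian of an ℍ(ℂ)-valued function -/
noncomputable def qlap (F : V3 → HC) (x : V3) : HC :=
  qpd 0 (qpd 0 F) x + qpd 1 (qpd 1 F) x + qpd 2 (qpd 2 F) x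

/-- ContDiffOn for ℍ(ℂ)-valued functions, componentwise -/
def QContDiffOn (n : ℕ∞) (F : V3 → HC) (s : Set V3) : Prop :=
  ContDiffOn ℝ n (fun x => (F x).re) s ∧ ContDiffOn ℝ n (fun x => (F x).imI) s ∧
  ContDiffOn ℝ n (fun x => (F x).imJ) s ∧ ContDiffOn ℝ n (fun x => (F x).imK) s

/-- euclidean norm on ℝ³ -/
noncomputable def nrm (x : V3) : ℝ := Real.sqrt (x 0 ^ 2 + x 1 ^ 2 + x 2 ^ 2)

/-- fundamental solution of the Helmholtz operator -/
noncomputable def theta (α : ℂ) (x : V3) : ℂ :=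
  -Complex.exp (Complex.I * α * (nrm x : ℂ)) / (4 * Real.pi * (nrm x : ℂ))

/-- x as a purely vectorial quaternion -/
def xq (x : V3) : HC := vecq fun k => ((x k : ℝ) : ℂ)


/-- The explicit fundamental solution K_α. -/
noncomputable def Kfun (α : ℂ) (y : V3) : HC :=
  (α • (1 : HC) + (((nrm y : ℂ)) ^ 2)⁻¹ • xq y
    - (Complex.I * α * ((nrm y : ℂ))⁻¹) • xq y) * scq (theta α y)

-- ===== auxiliary lemmas =====
section Aux

noncomputable def pr (k : Fin 3) : V3 →L[ℝ] ℝ :=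
  ContinuousLinearMap.proj (R := ℝ) (φ := fun _ : Fin 3 => ℝ) k

lemma nrm_pos {x : V3} (hx : x ≠ 0) : 0 < nrm x := by
  have h : 0 < x 0 ^ 2 + x 1 ^ 2 + x 2 ^ 2 := by
    rcases Function.ne_iff.1 hx with ⟨k, hk⟩
    fin_cases k <;> simp at hk <;>
      nlinarith [sq_nonneg (x 0), sq_nonneg (x 1), sq_nonneg (x 2),
        pow_two_pos_of_ne_zero hk]
  exact Real.sqrt_pos.2 h

lemma nrm_sq {x : V3} : nrm x ^ 2 = x 0 ^ 2 + x 1 ^ 2 + x 2 ^ 2 := by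
  have : (0:ℝ) ≤ x 0 ^ 2 + x 1 ^ 2 + x 2 ^ 2 := by positivity
  simpa [nrm] using Real.sq_sqrt this

noncomputable def nL (x : V3) : V3 →L[ℝ] ℝ :=
  (nrm x)⁻¹ • (x 0 • pr 0 + x 1 • pr 1 + x 2 • pr 2)

lemma nL_apply (x : V3) (k : Fin 3) : nL x (Pi.single k 1) = (nrm x)⁻¹ * x k := by
  fin_cases k <;>
    simp [nL, pr, ContinuousLinearMap.proj, Pi.single, Function.update]

lemma hasFDerivAt_nrm {x : V3} (hx : x ≠ 0) : HasFDerivAt nrm (nL x) x := by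
  have h0 : (0:ℝ) < x 0 ^ 2 + x 1 ^ 2 + x 2 ^ 2 := by
    have := nrm_pos hx; nlinarith [nrm_sq (x := x), this]
  have hq : HasFDerivAt (fun y : V3 => y 0 ^ 2 + y 1 ^ 2 + y 2 ^ 2)
      ((2 * x 0) • pr 0 + (2 * x 1) • pr 1 + (2 * x 2) • pr 2) x := by
    have h : ∀ k : Fin 3, HasFDerivAt (fun y : V3 => y k) (pr k) x :=
      fun k => (ContinuousLinearMap.proj (R := ℝ) (φ := fun _ : Fin 3 => ℝ) k).hasFDerivAt
    have h0' := (((h 0).mul (h 0)).add ((h 1).mul (h 1))).add ((h 2).mul (h 2))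
    convert h0' using 1 <;> try with_reducible_and_instances rfl
    · ext y; simp [sq]
    · ext v; simp [pr, ContinuousLinearMap.proj]; ring
  have hs : HasDerivAt Real.sqrt (1 / (2 * Real.sqrt (x 0 ^ 2 + x 1 ^ 2 + x 2 ^ 2)))
      (x 0 ^ 2 + x 1 ^ 2 + x 2 ^ 2) := Real.hasDerivAt_sqrt (ne_of_gt h0)
  have hcomp := hs.comp_hasFDerivAt x hq
  refine hcomp.congr_fderiv ?_
  ext v
  have hr : nrm x ≠ 0 := ne_of_gt (nrm_pos hx)
  simp [nL, nrm, pr, ContinuousLinearMap.proj]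
  ring

lemma pd_radial (φ : ℝ → ℂ) (D : ℂ) {x : V3} (hx : x ≠ 0)
    (hφ : HasDerivAt φ D (nrm x)) (k : Fin 3) :
    pd k (fun y => φ (nrm y)) x = (((x k / nrm x : ℝ)) : ℂ) * D := by
  have h : HasFDerivAt (fun y => φ (nrm y))
      ((ContinuousLinearMap.smulRight (1 : ℝ →L[ℝ] ℝ) D).comp (nL x)) x :=
    hφ.hasFDerivAt.comp x (hasFDerivAt_nrm hx)
  rw [pd, h.fderiv]
  simp [nL_apply, Complex.real_smul, div_eq_inv_mul]

lemma hasFDerivAt_coord (x : V3) (j : Fin 3) :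
    HasFDerivAt (fun y : V3 => ((y j : ℝ) : ℂ)) (Complex.ofRealCLM.comp (pr j)) x :=
  (Complex.ofRealCLM.comp (pr j)).hasFDerivAt

lemma pd_coord_radial (φ : ℝ → ℂ) (D : ℂ) {x : V3} (hx : x ≠ 0)
    (hφ : HasDerivAt φ D (nrm x)) (j k : Fin 3) :
    pd k (fun y => ((y j : ℝ) : ℂ) * φ (nrm y)) x
      = (if j = k then (1:ℂ) else 0) * φ (nrm x)
        + ((x j : ℝ) : ℂ) * ((((x k / nrm x : ℝ)) : ℂ) * D) := by
  have hrad := hφ.hasFDerivAt.comp x (hasFDerivAt_nrm hx)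
  have h : HasFDerivAt (fun y => ((y j : ℝ) : ℂ) * φ (nrm y))
      (((x j : ℝ) : ℂ) • (ContinuousLinearMap.smulRight (1 : ℝ →L[ℝ] ℝ) D).comp (nL x)
        + φ (nrm x) • Complex.ofRealCLM.comp (pr j)) x := (hasFDerivAt_coord x j).mul hrad
  rw [pd, h.fderiv]
  have hjk : (pr j) (Pi.single k 1) = if j = k then (1:ℝ) else 0 := by
    fin_cases j <;> fin_cases k <;> simp [pr, Pi.single, Function.update]
  simp [ContinuousLinearMap.comp_apply, hjk, nL_apply, Complex.real_smul,
    div_eq_inv_mul]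
  split <;> push_cast <;> ring

noncomputable def ph0 (α : ℂ) (r : ℝ) : ℂ :=
  α * (-Complex.exp (Complex.I * α * r) / (4 * Real.pi * r))

noncomputable def ph1 (α : ℂ) (r : ℝ) : ℂ :=
  ((((r:ℂ)) ^ 2)⁻¹ - Complex.I * α * ((r:ℂ))⁻¹)
    * (-Complex.exp (Complex.I * α * r) / (4 * Real.pi * r))

lemma pi_ne : ((Real.pi : ℂ)) ≠ 0 := by exact_mod_cast Real.pi_ne_zero

lemma hasDerivAt_theta (α : ℂ) {r : ℝ} (hr : r ≠ 0) :
    HasDerivAt (fun s : ℝ => -Complex.exp (Complex.I * α * s) / (4 * Real.pi * s))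
      ((Complex.I * α - ((r:ℂ))⁻¹)
        * (-Complex.exp (Complex.I * α * r) / (4 * Real.pi * r))) r := by
  have hrc : ((r:ℂ)) ≠ 0 := by exact_mod_cast hr
  have hid : HasDerivAt (fun s : ℝ => ((s : ℝ) : ℂ)) 1 r := by
    simpa using (hasDerivAt_id r).ofReal_comp
  have hIa : HasDerivAt (fun s : ℝ => Complex.I * α * (s : ℂ)) (Complex.I * α) r := by
    simpa using hid.const_mul (Complex.I * α)
  have hE := hIa.cexp
  have hden : HasDerivAt (fun s : ℝ => (4 * (Real.pi:ℂ) * (s:ℂ))) (4 * Real.pi) r := by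
    simpa using hid.const_mul (4 * (Real.pi:ℂ))
  have hdne : (4 * (Real.pi:ℂ) * (r:ℂ)) ≠ 0 := by simp [Real.pi_ne_zero, hrc]
  have h := hE.neg.div hden hdne
  refine h.congr_deriv ?_
  simp only [Pi.neg_apply]
  set E : ℂ := Complex.exp (Complex.I * α * r) with hEd
  set R : ℂ := ((r:ℝ):ℂ) with hR
  set P : ℂ := ((Real.pi:ℝ):ℂ) with hP
  have hPne : P ≠ 0 := pi_ne
  have hRne : R ≠ 0 := hrc
  clear_value E R P
  field_simp
  ring

lemma hasDerivAt_ph0 (α : ℂ) {r : ℝ} (hr : r ≠ 0) :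
    HasDerivAt (ph0 α) (-(α * r) * ph1 α r) r := by
  have hrc : ((r:ℂ)) ≠ 0 := by exact_mod_cast hr
  have h := (hasDerivAt_theta α hr).const_mul α
  refine h.congr_deriv ?_
  rw [ph1]
  set T : ℂ := -Complex.exp (Complex.I * α * r) / (4 * Real.pi * r) with hT
  set R : ℂ := ((r:ℝ):ℂ) with hR
  have hRne : R ≠ 0 := hrc
  clear_value T R
  field_simp
  ring

lemma hasDerivAt_ph1 (α : ℂ) {r : ℝ} (hr : r ≠ 0) :
    HasDerivAt (ph1 α) ((α * ph0 α r - 3 * ph1 α r) / r) r := by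
  have hrc : ((r:ℂ)) ≠ 0 := by exact_mod_cast hr
  have hid : HasDerivAt (fun s : ℝ => ((s : ℝ) : ℂ)) 1 r := by
    simpa using (hasDerivAt_id r).ofReal_comp
  have hsq : HasDerivAt (fun s : ℝ => ((s:ℂ)) ^ 2) (2 * (r:ℂ)) r := by
    have h2 := hid.mul hid
    simp only [pow_two]
    refine h2.congr_deriv ?_; ring
  have hne : ((r:ℂ)) ^ 2 ≠ 0 := pow_ne_zero 2 hrc
  have hsqinv : HasDerivAt (fun s : ℝ => (((s:ℂ)) ^ 2)⁻¹) (-(((r:ℂ)^2)^2)⁻¹ * (2*(r:ℂ))) r := by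
    have h2 := (hasDerivAt_inv hne).comp r hsq
    simpa [Function.comp_def] using h2
  have hinv : HasDerivAt (fun s : ℝ => ((s:ℂ))⁻¹) (-(((r:ℂ))^2)⁻¹ * 1) r := by
    have h2 := (hasDerivAt_inv hrc).comp r hid
    simpa [Function.comp_def] using h2
  have hfac := hsqinv.sub (hinv.const_mul (Complex.I * α))
  have h := hfac.mul (hasDerivAt_theta α hr)
  refine h.congr_deriv ?_
  rw [ph0, ph1]
  simp only [Pi.sub_apply]
  set T : ℂ := -Complex.exp (Complex.I * α * r) / (4 * Real.pi * r) with hT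
  set R : ℂ := ((r:ℝ):ℂ) with hR
  have hRne : R ≠ 0 := hrc
  clear_value T R
  field_simp
  ring_nf
  simp only [Complex.I_sq]
  ring

lemma Kre (α : ℂ) (y : V3) : (Kfun α y).re = ph0 α (nrm y) := by
  simp only [Kfun, Quaternion.re_mul, Quaternion.re_sub, Quaternion.imI_sub, Quaternion.imJ_sub,
    Quaternion.imK_sub, Quaternion.re_add, Quaternion.imI_add, Quaternion.imJ_add, Quaternion.imK_add,
    Quaternion.re_smul, Quaternion.imI_smul, Quaternion.imJ_smul, Quaternion.imK_smul,
    Quaternion.re_one, Quaternion.imI_one, Quaternion.imJ_one, Quaternion.imK_one]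
  simp [theta, scq, xq, vecq, ph0]

lemma KimI (α : ℂ) (y : V3) : (Kfun α y).imI = ((y 0 : ℝ) : ℂ) * ph1 α (nrm y) := by
  simp only [Kfun, Quaternion.imI_mul, Quaternion.re_sub, Quaternion.imI_sub, Quaternion.imJ_sub,
    Quaternion.imK_sub, Quaternion.re_add, Quaternion.imI_add, Quaternion.imJ_add, Quaternion.imK_add,
    Quaternion.re_smul, Quaternion.imI_smul, Quaternion.imJ_smul, Quaternion.imK_smul,
    Quaternion.re_one, Quaternion.imI_one, Quaternion.imJ_one, Quaternion.imK_one]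
  simp [theta, scq, xq, vecq, ph1]
  ring

lemma KimJ (α : ℂ) (y : V3) : (Kfun α y).imJ = ((y 1 : ℝ) : ℂ) * ph1 α (nrm y) := by
  simp only [Kfun, Quaternion.imJ_mul, Quaternion.re_sub, Quaternion.imI_sub, Quaternion.imJ_sub,
    Quaternion.imK_sub, Quaternion.re_add, Quaternion.imI_add, Quaternion.imJ_add, Quaternion.imK_add,
    Quaternion.re_smul, Quaternion.imI_smul, Quaternion.imJ_smul, Quaternion.imK_smul,
    Quaternion.re_one, Quaternion.imI_one, Quaternion.imJ_one, Quaternion.imK_one]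
  simp [theta, scq, xq, vecq, ph1]
  ring

lemma KimK (α : ℂ) (y : V3) : (Kfun α y).imK = ((y 2 : ℝ) : ℂ) * ph1 α (nrm y) := by
  simp only [Kfun, Quaternion.imK_mul, Quaternion.re_sub, Quaternion.imI_sub, Quaternion.imJ_sub,
    Quaternion.imK_sub, Quaternion.re_add, Quaternion.imI_add, Quaternion.imJ_add, Quaternion.imK_add,
    Quaternion.re_smul, Quaternion.imI_smul, Quaternion.imJ_smul, Quaternion.imK_smul,
    Quaternion.re_one, Quaternion.imI_one, Quaternion.imJ_one, Quaternion.imK_one]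
  simp [theta, scq, xq, vecq, ph1]
  ring

end Aux
-- ===== end auxiliary lemmas =====

set_option maxHeartbeats 2000000 in
lemma stmt3_aux (α : ℂ) (x : V3) (hx : x ≠ 0) :
    Dq (Kfun α) x + α • Kfun α x = 0 := by
  have hr : nrm x ≠ 0 := ne_of_gt (nrm_pos hx)
  have hrc : ((nrm x : ℝ) : ℂ) ≠ 0 := by exact_mod_cast hr
  have h0 := hasDerivAt_ph0 α hr
  have h1 := hasDerivAt_ph1 α hr
  have hfr : (fun y => (Kfun α y).re) = fun y => ph0 α (nrm y) := funext fun y => Kre α y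
  have hfi : (fun y => (Kfun α y).imI) = fun y => ((y 0 : ℝ) : ℂ) * ph1 α (nrm y) :=
    funext fun y => KimI α y
  have hfj : (fun y => (Kfun α y).imJ) = fun y => ((y 1 : ℝ) : ℂ) * ph1 α (nrm y) :=
    funext fun y => KimJ α y
  have hfk : (fun y => (Kfun α y).imK) = fun y => ((y 2 : ℝ) : ℂ) * ph1 α (nrm y) :=
    funext fun y => KimK α y
  have pre : ∀ k, pd k (fun y => (Kfun α y).re) x
      = ((x k / nrm x : ℝ) : ℂ) * (-(α * nrm x) * ph1 α (nrm x)) := fun k => by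
    rw [hfr]; exact pd_radial _ _ hx h0 k
  have pI : ∀ k, pd k (fun y => (Kfun α y).imI) x
      = (if (0 : Fin 3) = k then (1:ℂ) else 0) * ph1 α (nrm x)
        + ((x 0 : ℝ) : ℂ) * (((x k / nrm x : ℝ) : ℂ)
          * ((α * ph0 α (nrm x) - 3 * ph1 α (nrm x)) / nrm x)) := fun k => by
    rw [hfi]; exact pd_coord_radial _ _ hx h1 0 k
  have pJ : ∀ k, pd k (fun y => (Kfun α y).imJ) x
      = (if (1 : Fin 3) = k then (1:ℂ) else 0) * ph1 α (nrm x)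
        + ((x 1 : ℝ) : ℂ) * (((x k / nrm x : ℝ) : ℂ)
          * ((α * ph0 α (nrm x) - 3 * ph1 α (nrm x)) / nrm x)) := fun k => by
    rw [hfj]; exact pd_coord_radial _ _ hx h1 1 k
  have pK : ∀ k, pd k (fun y => (Kfun α y).imK) x
      = (if (2 : Fin 3) = k then (1:ℂ) else 0) * ph1 α (nrm x)
        + ((x 2 : ℝ) : ℂ) * (((x k / nrm x : ℝ) : ℂ)
          * ((α * ph0 α (nrm x) - 3 * ph1 α (nrm x)) / nrm x)) := fun k => by
    rw [hfk]; exact pd_coord_radial _ _ hx h1 2 k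
  have hsum : ((x 0 : ℝ) : ℂ) ^ 2 + ((x 1 : ℝ) : ℂ) ^ 2 + ((x 2 : ℝ) : ℂ) ^ 2
      = ((nrm x : ℝ) : ℂ) ^ 2 := by exact_mod_cast (nrm_sq (x := x)).symm
  have pI0 := pI 0
  rw [if_pos rfl] at pI0
  have pI1 := pI 1
  rw [if_neg (by decide)] at pI1
  have pI2 := pI 2
  rw [if_neg (by decide)] at pI2
  have pJ0 := pJ 0
  rw [if_neg (by decide)] at pJ0
  have pJ1 := pJ 1
  rw [if_pos rfl] at pJ1
  have pJ2 := pJ 2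
  rw [if_neg (by decide)] at pJ2
  have pK0 := pK 0
  rw [if_neg (by decide)] at pK0
  have pK1 := pK 1
  rw [if_neg (by decide)] at pK1
  have pK2 := pK 2
  rw [if_pos rfl] at pK2
  have pre0 := pre 0
  have pre1 := pre 1
  have pre2 := pre 2
  rw [Quaternion.ext_iff]
  refine ⟨?_, ?_, ?_, ?_⟩ <;>
  · simp only [Dq, Quaternion.re_add, Quaternion.imI_add,
      Quaternion.imJ_add, Quaternion.imK_add, Quaternion.re_mul, Quaternion.imI_mul,
      Quaternion.imJ_mul, Quaternion.imK_mul, Quaternion.re_smul, Quaternion.imI_smul,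
      Quaternion.imJ_smul, Quaternion.imK_smul, Quaternion.re_zero, Quaternion.imI_zero,
      Quaternion.imJ_zero, Quaternion.imK_zero, smul_eq_mul]
    simp only [qpd, e1, e2, e3]
    clear pre pI pJ pK
    simp only [pI0, pI1, pI2, pJ0, pJ1, pJ2, pK0, pK1, pK2, pre0, pre1, pre2, one_mul, zero_mul]
    simp only [Kre, KimI, KimJ, KimK]
    push_cast
    field_simp
    try ring
    try linear_combination (3 * ph1 α (nrm x) - α * ph0 α (nrm x)) * hsum

/-- (D + α)K_α = 0 on ℝ³ \ {0}. -/
theorem stmt3 (α : ℂ) (x : V3) (hx : x ≠ 0) :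
    Dq (Kfun α) x + α • Kfun α x = 0 :=
  stmt3_aux α x hx
end
end

section
/- Let α ∈ ℂ, β ∈ ℂ with 1 + αβ ≠ 0 and 1 - αβ ≠ 0, and let E, H : Ω → ℂ³ be C¹ vector fields on an open set Ω ⊆ ℝ³ with div E = div H = 0, satisfying the chiral Maxwell system rot E = -iα(H + β rot H) and rot H = iα(E + β rot E). Then φ = E + iH satisfies (D + α₁)φ = 0 and ψ = E - iH satisfies (D - α₂)ψ = 0, where α₁ = α/(1+αβ) and α₂ = α/(1-αβ). -/
noncomputable section

/-- componentwise smoothness of ℂ³-valued fields -/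
def VContDiffOn (n : ℕ∞) (F : V3 → Fin 3 → ℂ) (s : Set V3) : Prop :=
  ∀ k, ContDiffOn ℝ n (fun x => F x k) s

lemma pd_lin (k : Fin 3) (c : ℂ) (f g : V3 → ℂ) (x : V3)
    (hf : DifferentiableAt ℝ f x) (hg : DifferentiableAt ℝ g x) :
    pd k (fun y => f y + c * g y) x = pd k f x + c * pd k g x := by
  have h : HasFDerivAt (fun y => f y + c * g y)
      (fderiv ℝ f x + c • fderiv ℝ g x) x :=
    hf.hasFDerivAt.add (hg.hasFDerivAt.const_mul c)
  simp [pd, h.fderiv, smul_eq_mul]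

lemma Dq_vecq (F : V3 → Fin 3 → ℂ) (x : V3) :
    Dq (fun y => vecq (F y)) x = ⟨-(dvg F x), rot F x 0, rot F x 1, rot F x 2⟩ := by
  ext <;> simp only [Dq, Quaternion.re_add, Quaternion.imI_add, Quaternion.imJ_add, Quaternion.imK_add,
    Quaternion.re_mul, Quaternion.imI_mul, Quaternion.imJ_mul, Quaternion.imK_mul] <;>
    simp [qpd, e1, e2, e3, vecq, dvg, rot, pd, Quaternion.ext_iff] <;> ring


/-- diagonalization of the chiral Maxwell system. -/
theorem stmt4 (α β : ℂ) (h1 : 1 + α * β ≠ 0) (h2 : 1 - α * β ≠ 0)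
    (Ω : Set V3) (hΩ : IsOpen Ω) (E H : V3 → Fin 3 → ℂ)
    (hE : VContDiffOn 1 E Ω) (hH : VContDiffOn 1 H Ω)
    (hdE : ∀ x ∈ Ω, dvg E x = 0) (hdH : ∀ x ∈ Ω, dvg H x = 0)
    (hrE : ∀ x ∈ Ω, rot E x = fun k => -Complex.I * α * (H x k + β * rot H x k))
    (hrH : ∀ x ∈ Ω, rot H x = fun k => Complex.I * α * (E x k + β * rot E x k)) :
    ∀ x ∈ Ω,
      (Dq (fun y => vecq fun k => E y k + Complex.I * H y k) x
        + (α / (1 + α * β)) • vecq (fun k => E x k + Complex.I * H x k) = 0) ∧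
      (Dq (fun y => vecq fun k => E y k - Complex.I * H y k) x
        - (α / (1 - α * β)) • vecq (fun k => E x k - Complex.I * H x k) = 0) := by
  intro x hx
  have dE : ∀ j : Fin 3, DifferentiableAt ℝ (fun y => E y j) x := fun j =>
    (((hE j).differentiableOn one_ne_zero) x hx).differentiableAt (hΩ.mem_nhds hx)
  have dH : ∀ j : Fin 3, DifferentiableAt ℝ (fun y => H y j) x := fun j =>
    (((hH j).differentiableOn one_ne_zero) x hx).differentiableAt (hΩ.mem_nhds hx)
  have keyP : ∀ (j k : Fin 3),
      pd k (fun y => E y j + Complex.I * H y j) x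
        = pd k (fun y => E y j) x + Complex.I * pd k (fun y => H y j) x :=
    fun j k => pd_lin k _ _ _ x (dE j) (dH j)
  have keyM : ∀ (j k : Fin 3),
      pd k (fun y => E y j - Complex.I * H y j) x
        = pd k (fun y => E y j) x + (-Complex.I) * pd k (fun y => H y j) x := by
    intro j k
    have := pd_lin k (-Complex.I) _ _ x (dE j) (dH j)
    simpa [sub_eq_add_neg, neg_mul] using this
  -- divergence of the combined fields
  have hdP : dvg (fun y k => E y k + Complex.I * H y k) x = 0 := by
    have a := hdE x hx; have b := hdH x hx
    simp only [dvg] at a b ⊢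
    rw [keyP 0 0, keyP 1 1, keyP 2 2]
    linear_combination a + Complex.I * b
  have hdM : dvg (fun y k => E y k - Complex.I * H y k) x = 0 := by
    have a := hdE x hx; have b := hdH x hx
    simp only [dvg] at a b ⊢
    rw [keyM 0 0, keyM 1 1, keyM 2 2]
    linear_combination a - Complex.I * b
  -- curls of the combined fields
  have hrP : ∀ k, rot (fun y k => E y k + Complex.I * H y k) x k
      = rot E x k + Complex.I * rot H x k := by
    intro k; fin_cases k <;> simp [rot, keyP] <;> ring
  have hrM : ∀ k, rot (fun y k => E y k - Complex.I * H y k) x k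
      = rot E x k - Complex.I * rot H x k := by
    intro k; fin_cases k <;> simp [rot, keyM] <;> ring
  -- algebraic identities from the Maxwell system
  have combP : ∀ k : Fin 3, (1 + α * β) * (rot E x k + Complex.I * rot H x k)
      = -α * (E x k + Complex.I * H x k) := by
    intro k
    have hk1 := congrFun (hrE x hx) k
    have hk2 := congrFun (hrH x hx) k
    linear_combination hk1 + Complex.I * hk2
      + (α * β * rot E x k + α * E x k) * Complex.I_sq
  have combM : ∀ k : Fin 3, (1 - α * β) * (rot E x k - Complex.I * rot H x k)
      = α * (E x k - Complex.I * H x k) := by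
    intro k
    have hk1 := congrFun (hrE x hx) k
    have hk2 := congrFun (hrH x hx) k
    linear_combination hk1 - Complex.I * hk2
      - (α * β * rot E x k + α * E x k) * Complex.I_sq
  constructor
  · ext <;>
      simp only [Quaternion.re_add, Quaternion.imI_add, Quaternion.imJ_add,
        Quaternion.imK_add, Quaternion.re_smul, Quaternion.imI_smul,
        Quaternion.imJ_smul, Quaternion.imK_smul, Quaternion.re_zero,
        Quaternion.imI_zero, Quaternion.imJ_zero, Quaternion.imK_zero,
        smul_eq_mul] <;>
      rw [Dq_vecq (fun y k => E y k + Complex.I * H y k) x] <;> simp only [vecq]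
    · simp [hdP]
    all_goals
      rw [hrP]
      field_simp
      first
        | linear_combination combP 0
        | linear_combination combP 1
        | linear_combination combP 2
  · rw [sub_eq_zero]
    ext <;>
      simp only [Quaternion.re_smul, Quaternion.imI_smul,
        Quaternion.imJ_smul, Quaternion.imK_smul, smul_eq_mul] <;>
      rw [Dq_vecq (fun y k => E y k - Complex.I * H y k) x] <;> simp only [vecq]
    · simp [hdM]
    all_goals
      rw [hrM]
      field_simp
      first
        | linear_combination combM 0
        | linear_combination combM 1
        | linear_combination combM 2
end
end

section
/- Conversely to the diagonalization of the chiral Maxwell system: if φ, ψ : Ω → ℂ³ are C¹ purely vectorial fields satisfying (D + α₁)φ = 0 and (D - α₂)ψ = 0 with α₁ = α/(1+αβ), α₂ = α/(1-αβ), then E = (φ + ψ)/2 and H = (φ - ψ)/(2i) satisfy rot E = -iα(H + β rot H), rot H = iα(E + β rot E), and div E = div H = 0. -/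
noncomputable section

lemma my_pd_zero (k : Fin 3) (x : V3) : pd k (fun _ : V3 => (0:ℂ)) x = 0 := by
  simp [pd]

lemma my_Dq_vec (F : V3 → Fin 3 → ℂ) (x : V3) :
    Dq (fun y => vecq (F y)) x =
      ⟨-(pd 0 (fun y => F y 0) x + pd 1 (fun y => F y 1) x + pd 2 (fun y => F y 2) x),
       pd 1 (fun y => F y 2) x - pd 2 (fun y => F y 1) x,
       pd 2 (fun y => F y 0) x - pd 0 (fun y => F y 2) x,
       pd 0 (fun y => F y 1) x - pd 1 (fun y => F y 0) x⟩ := by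
  ext <;>
    simp only [Dq, Quaternion.re_add, Quaternion.imI_add, Quaternion.imJ_add, Quaternion.imK_add,
      Quaternion.re_mul, Quaternion.imI_mul, Quaternion.imJ_mul, Quaternion.imK_mul] <;>
    simp [qpd, e1, e2, e3, vecq, my_pd_zero] <;>
    ring

/-- extraction of div and rot equations from the quaternionic equation -/
lemma my_extract (c : ℂ) (F : V3 → Fin 3 → ℂ) (x : V3)
    (h : Dq (fun y => vecq (F y)) x + c • vecq (F x) = 0) :
    (pd 0 (fun y => F y 0) x + pd 1 (fun y => F y 1) x + pd 2 (fun y => F y 2) x = 0) ∧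
    (pd 1 (fun y => F y 2) x - pd 2 (fun y => F y 1) x = -c * F x 0) ∧
    (pd 2 (fun y => F y 0) x - pd 0 (fun y => F y 2) x = -c * F x 1) ∧
    (pd 0 (fun y => F y 1) x - pd 1 (fun y => F y 0) x = -c * F x 2) := by
  rw [Quaternion.ext_iff] at h
  obtain ⟨h1, h2, h3, h4⟩ := h
  simp only [Quaternion.re_add, Quaternion.imI_add, Quaternion.imJ_add, Quaternion.imK_add,
    Quaternion.re_sub, Quaternion.imI_sub, Quaternion.imJ_sub, Quaternion.imK_sub,
    Quaternion.re_smul, Quaternion.imI_smul, Quaternion.imJ_smul, Quaternion.imK_smul,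
    Quaternion.re_zero, Quaternion.imI_zero, Quaternion.imJ_zero, Quaternion.imK_zero] at h1 h2 h3 h4
  rw [my_Dq_vec] at h1 h2 h3 h4
  simp [vecq] at h1 h2 h3 h4
  refine ⟨by linear_combination -h1, ?_, ?_, ?_⟩ <;>
    [linear_combination h2; linear_combination h3; linear_combination h4]


/-- extraction, subtraction form -/
lemma my_extract' (c : ℂ) (F : V3 → Fin 3 → ℂ) (x : V3)
    (h : Dq (fun y => vecq (F y)) x - c • vecq (F x) = 0) :
    (pd 0 (fun y => F y 0) x + pd 1 (fun y => F y 1) x + pd 2 (fun y => F y 2) x = 0) ∧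
    (pd 1 (fun y => F y 2) x - pd 2 (fun y => F y 1) x = c * F x 0) ∧
    (pd 2 (fun y => F y 0) x - pd 0 (fun y => F y 2) x = c * F x 1) ∧
    (pd 0 (fun y => F y 1) x - pd 1 (fun y => F y 0) x = c * F x 2) := by
  rw [Quaternion.ext_iff] at h
  obtain ⟨h1, h2, h3, h4⟩ := h
  simp only [Quaternion.re_add, Quaternion.imI_add, Quaternion.imJ_add, Quaternion.imK_add,
    Quaternion.re_sub, Quaternion.imI_sub, Quaternion.imJ_sub, Quaternion.imK_sub,
    Quaternion.re_smul, Quaternion.imI_smul, Quaternion.imJ_smul, Quaternion.imK_smul,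
    Quaternion.re_zero, Quaternion.imI_zero, Quaternion.imJ_zero, Quaternion.imK_zero] at h1 h2 h3 h4
  rw [my_Dq_vec] at h1 h2 h3 h4
  simp [vecq] at h1 h2 h3 h4
  refine ⟨by linear_combination -h1, ?_, ?_, ?_⟩ <;>
    [linear_combination h2; linear_combination h3; linear_combination h4]

lemma my_pd_add_div (c : ℂ) (f g : V3 → ℂ) (x : V3) (k : Fin 3)
    (hf : DifferentiableAt ℝ f x) (hg : DifferentiableAt ℝ g x) :
    pd k (fun y => (f y + g y) / c) x = (pd k f x + pd k g x) / c := by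
  unfold pd
  rw [show (fun y => (f y + g y)/c) = fun y => c⁻¹ • (f y + g y) by
    funext y; simp [div_eq_inv_mul, smul_eq_mul]]
  rw [fderiv_fun_const_smul (f := fun y => f y + g y) (hf.add hg), fderiv_fun_add hf hg]
  simp [div_eq_inv_mul, smul_eq_mul, mul_add]

lemma my_pd_sub_div (c : ℂ) (f g : V3 → ℂ) (x : V3) (k : Fin 3)
    (hf : DifferentiableAt ℝ f x) (hg : DifferentiableAt ℝ g x) :
    pd k (fun y => (f y - g y) / c) x = (pd k f x - pd k g x) / c := by
  unfold pd
  rw [show (fun y => (f y - g y)/c) = fun y => c⁻¹ • (f y - g y) by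
    funext y; simp [div_eq_inv_mul, smul_eq_mul]]
  rw [fderiv_fun_const_smul (f := fun y => f y - g y) (hf.sub hg), fderiv_fun_sub hf hg]
  simp [div_eq_inv_mul, smul_eq_mul, mul_sub]

/-- converse to the diagonalization of the chiral Maxwell system. -/
theorem stmt5 (α β : ℂ) (h1 : 1 + α * β ≠ 0) (h2 : 1 - α * β ≠ 0)
    (Ω : Set V3) (hΩ : IsOpen Ω) (φ ψ : V3 → Fin 3 → ℂ)
    (hφ : VContDiffOn 1 φ Ω) (hψ : VContDiffOn 1 ψ Ω)
    (hφe : ∀ x ∈ Ω, Dq (fun y => vecq (φ y)) x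
        + (α / (1 + α * β)) • vecq (φ x) = 0)
    (hψe : ∀ x ∈ Ω, Dq (fun y => vecq (ψ y)) x
        - (α / (1 - α * β)) • vecq (ψ x) = 0) :
    ∀ x ∈ Ω,
      (rot (fun y k => (φ y k + ψ y k) / 2) x
        = fun k => -Complex.I * α *
            ((φ x k - ψ x k) / (2 * Complex.I)
              + β * rot (fun y k' => (φ y k' - ψ y k') / (2 * Complex.I)) x k) ) ∧
      (rot (fun y k => (φ y k - ψ y k) / (2 * Complex.I)) x
        = fun k => Complex.I * α *
            ((φ x k + ψ x k) / 2
              + β * rot (fun y k' => (φ y k' + ψ y k') / 2) x k) ) ∧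
      dvg (fun y k => (φ y k + ψ y k) / 2) x = 0 ∧
      dvg (fun y k => (φ y k - ψ y k) / (2 * Complex.I)) x = 0 := by
  intro x hx
  have hdφ : ∀ k, DifferentiableAt ℝ (fun y => φ y k) x := fun k =>
    ((hφ k).contDiffAt (hΩ.mem_nhds hx)).differentiableAt one_ne_zero
  have hdψ : ∀ k, DifferentiableAt ℝ (fun y => ψ y k) x := fun k =>
    ((hψ k).contDiffAt (hΩ.mem_nhds hx)).differentiableAt one_ne_zero
  obtain ⟨hφd, hφ0, hφ1, hφ2⟩ := my_extract (α / (1 + α * β)) φ x (hφe x hx)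
  obtain ⟨hψd, hψ0, hψ1, hψ2⟩ := my_extract' (α / (1 - α * β)) ψ x (hψe x hx)
  have hI2 : Complex.I * Complex.I = -1 := Complex.I_mul_I
  -- cleared-denominator forms
  have Hφ0 : (1 + α*β) * (pd 1 (fun y => φ y 2) x - pd 2 (fun y => φ y 1) x)
      = -(α * φ x 0) := by rw [hφ0]; field_simp; try ring
  have Hφ1 : (1 + α*β) * (pd 2 (fun y => φ y 0) x - pd 0 (fun y => φ y 2) x)
      = -(α * φ x 1) := by rw [hφ1]; field_simp; try ring
  have Hφ2 : (1 + α*β) * (pd 0 (fun y => φ y 1) x - pd 1 (fun y => φ y 0) x)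
      = -(α * φ x 2) := by rw [hφ2]; field_simp; try ring
  have Hψ0 : (1 - α*β) * (pd 1 (fun y => ψ y 2) x - pd 2 (fun y => ψ y 1) x)
      = α * ψ x 0 := by rw [hψ0]; field_simp; try ring
  have Hψ1 : (1 - α*β) * (pd 2 (fun y => ψ y 0) x - pd 0 (fun y => ψ y 2) x)
      = α * ψ x 1 := by rw [hψ1]; field_simp; try ring
  have Hψ2 : (1 - α*β) * (pd 0 (fun y => ψ y 1) x - pd 1 (fun y => ψ y 0) x)
      = α * ψ x 2 := by rw [hψ2]; field_simp; try ring
  have hE : ∀ (k j : Fin 3), pd k (fun y => (φ y j + ψ y j) / 2) x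
      = (pd k (fun y => φ y j) x + pd k (fun y => ψ y j) x) / 2 := fun k j =>
    my_pd_add_div 2 _ _ x k (hdφ j) (hdψ j)
  have hH : ∀ (k j : Fin 3), pd k (fun y => (φ y j - ψ y j) / (2 * Complex.I)) x
      = (pd k (fun y => φ y j) x - pd k (fun y => ψ y j) x) / (2 * Complex.I) := fun k j =>
    my_pd_sub_div (2 * Complex.I) _ _ x k (hdφ j) (hdψ j)
  have hdiv : ∀ z : ℂ, z / (2 * Complex.I) = -Complex.I * z / 2 := by
    intro z
    rw [div_eq_div_iff (by simp [Complex.I_ne_zero]) (two_ne_zero)]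
    linear_combination (2*z) * hI2
  have h2fin : (⟨2, by omega⟩ : Fin 3) = 2 := rfl
  refine ⟨?_, ?_, ?_, ?_⟩
  · funext k
    fin_cases k <;>
      simp only [rot, Matrix.cons_val_zero, Matrix.cons_val_one, Matrix.head_cons,
        Matrix.cons_val_two, Matrix.tail_cons, Fin.isValue, Fin.zero_eta, Fin.mk_one, h2fin,
        hE, hH] <;> simp only [hdiv]
    · linear_combination Hφ0 / 2 + Hψ0 / 2
        + (-(α/2) * ((φ x 0 - ψ x 0) + β * ((pd 1 (fun y => φ y 2) x - pd 1 (fun y => ψ y 2) x)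
            - (pd 2 (fun y => φ y 1) x - pd 2 (fun y => ψ y 1) x)))) * hI2
    · linear_combination Hφ1 / 2 + Hψ1 / 2
        + (-(α/2) * ((φ x 1 - ψ x 1) + β * ((pd 2 (fun y => φ y 0) x - pd 2 (fun y => ψ y 0) x)
            - (pd 0 (fun y => φ y 2) x - pd 0 (fun y => ψ y 2) x)))) * hI2
    · linear_combination Hφ2 / 2 + Hψ2 / 2
        + (-(α/2) * ((φ x 2 - ψ x 2) + β * ((pd 0 (fun y => φ y 1) x - pd 0 (fun y => ψ y 1) x)
            - (pd 1 (fun y => φ y 0) x - pd 1 (fun y => ψ y 0) x)))) * hI2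
  · funext k
    fin_cases k <;>
      simp only [rot, Matrix.cons_val_zero, Matrix.cons_val_one, Matrix.head_cons,
        Matrix.cons_val_two, Matrix.tail_cons, Fin.isValue, Fin.zero_eta, Fin.mk_one, h2fin,
        hE, hH] <;> simp only [hdiv]
    · linear_combination (-Complex.I/2) * Hφ0 + (Complex.I/2) * Hψ0
    · linear_combination (-Complex.I/2) * Hφ1 + (Complex.I/2) * Hψ1
    · linear_combination (-Complex.I/2) * Hφ2 + (Complex.I/2) * Hψ2
  · simp only [dvg, hE]
    linear_combination hφd / 2 + hψd / 2
  · simp only [dvg, hH]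
    simp only [hdiv]
    linear_combination (-Complex.I/2) * hφd + (Complex.I/2) * hψd
end
end

section
/- Let ε, μ, β be positive real constants and let E, H : ℝ × ℝ³ → ℝ³ be C¹ fields, j : ℝ × ℝ³ → ℝ³ and ρ : ℝ × ℝ³ → ℝ given sources satisfying the continuity equation ∂ₜρ + div j = 0. Define the biquaternionic operator M = β√(εμ) ∂ₜ D + √(εμ) ∂ₜ - iD and V = E - i√(μ/ε) H. Then V satisfies M V = -√(μ/ε) j - β√(μ/ε) ∂ₜρ + iρ/ε if and only if (E,H) satisfy the chiral Maxwell system: rot H = ε(∂ₜE + β ∂ₜ rot E) + j, rot E = -μ(∂ₜH + β ∂ₜ rot H), div E = ρ/ε, and div H = 0. -/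
noncomputable section

/-- time derivative ∂ₜ for functions on ℝ × ℝ³ -/
noncomputable def pdt {E : Type*} [NormedAddCommGroup E] [NormedSpace ℝ E]
    (g : ℝ × V3 → E) (p : ℝ × V3) : E :=
  fderiv ℝ g p (1, 0)

/-- componentwise time derivative of an ℍ(ℂ)-valued function -/
noncomputable def qpdt (F : ℝ × V3 → HC) (p : ℝ × V3) : HC :=
  ⟨pdt (fun q => (F q).re) p, pdt (fun q => (F q).imI) p,
   pdt (fun q => (F q).imJ) p, pdt (fun q => (F q).imK) p⟩

/-- the spatial Dirac operator acting on time-dependent quaternionic fields -/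
noncomputable def DqT (F : ℝ × V3 → HC) (p : ℝ × V3) : HC :=
  Dq (fun y => F (p.1, y)) p.2

/-- spatial componentwise Laplacian for time-dependent quaternionic fields -/
noncomputable def qlapT (F : ℝ × V3 → HC) (p : ℝ × V3) : HC :=
  qlap (fun y => F (p.1, y)) p.2

/-- componentwise smoothness of time-dependent quaternionic fields -/
def QCT (n : ℕ∞) (F : ℝ × V3 → HC) : Prop :=
  ContDiff ℝ n (fun p => (F p).re) ∧ ContDiff ℝ n (fun p => (F p).imI) ∧
  ContDiff ℝ n (fun p => (F p).imJ) ∧ ContDiff ℝ n (fun p => (F p).imK)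

/-- The field V = E - i√(μ/ε)H as a purely vectorial biquaternion. -/
noncomputable def Vfield (ε μ : ℝ) (E H : ℝ × V3 → Fin 3 → ℝ) (p : ℝ × V3) : HC :=
  vecq fun k => ((E p k : ℝ) : ℂ) - Complex.I * ((Real.sqrt (μ / ε) : ℝ) : ℂ) * ((H p k : ℝ) : ℂ)

/-- The chiral Maxwell operator M = β√(εμ)∂ₜD + √(εμ)∂ₜ - iD. -/
noncomputable def Mop (ε μ β : ℝ) (F : ℝ × V3 → HC) (p : ℝ × V3) : HC :=
  ((β * Real.sqrt (ε * μ) : ℝ) : ℂ) • qpdt (DqT F) p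
    + ((Real.sqrt (ε * μ) : ℝ) : ℂ) • qpdt F p
    - Complex.I • DqT F p


open Complex Filter Topology ContinuousLinearMap

noncomputable def dvgT (F : ℝ × V3 → Fin 3 → ℝ) (p : ℝ × V3) : ℝ :=
  dvg (fun y => F (p.1, y)) p.2

noncomputable def rotT (F : ℝ × V3 → Fin 3 → ℝ) (k : Fin 3) (p : ℝ × V3) : ℝ :=
  rot (fun y => F (p.1, y)) p.2 k

lemma sliceDiffAt {u : ℝ × V3 → ℝ} {t : ℝ} {x : V3} (hu : DifferentiableAt ℝ u (t, x)) :
    DifferentiableAt ℝ (fun y => u (t, y)) x :=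
  hu.comp x (DifferentiableAt.prodMk (differentiableAt_const t) differentiableAt_id)

lemma pdS_eq {u : ℝ × V3 → ℝ} {p : ℝ × V3} (hu : DifferentiableAt ℝ u p) (k : Fin 3) :
    pd k (fun y => u (p.1, y)) p.2 = fderiv ℝ u p (0, Pi.single k 1) := by
  have h1 : HasFDerivAt (fun y : V3 => ((p.1 : ℝ), y)) (inr ℝ ℝ V3) p.2 :=
    hasFDerivAt_prodMk_right _ _
  have hu' : HasFDerivAt u (fderiv ℝ u p) p := hu.hasFDerivAt
  have h2 : HasFDerivAt (fun y : V3 => u (p.1, y)) ((fderiv ℝ u p).comp (inr ℝ ℝ V3)) p.2 :=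
    hu'.comp p.2 h1
  rw [pd, h2.fderiv]
  rfl

lemma contDiff_pdS {u : ℝ × V3 → ℝ} (hu : ContDiff ℝ 2 u) (k : Fin 3) :
    ContDiff ℝ 1 (fun q : ℝ × V3 => pd k (fun y => u (q.1, y)) q.2) := by
  have he : (fun q : ℝ × V3 => pd k (fun y => u (q.1, y)) q.2)
      = fun q => fderiv ℝ u q (0, Pi.single k 1) := by
    funext q
    exact pdS_eq ((hu.differentiable (by norm_num)) q) k
  rw [he]
  exact (hu.fderiv_right (by norm_num)).clm_apply contDiff_const

lemma fdC {X : Type*} [NormedAddCommGroup X] [NormedSpace ℝ X] {u v : X → ℝ} {x : X}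
    (hu : DifferentiableAt ℝ u x) (hv : DifferentiableAt ℝ v x) (s : ℝ) (w : X) :
    fderiv ℝ (fun y => ((u y : ℝ) : ℂ) - Complex.I * ((s : ℝ) : ℂ) * ((v y : ℝ) : ℂ)) x w
      = ((fderiv ℝ u x w : ℝ) : ℂ) - Complex.I * ((s : ℝ) : ℂ) * ((fderiv ℝ v x w : ℝ) : ℂ) := by
  have hu' : HasFDerivAt (fun y => ((u y : ℝ) : ℂ)) (Complex.ofRealCLM.comp (fderiv ℝ u x)) x :=
    Complex.ofRealCLM.hasFDerivAt.comp x hu.hasFDerivAt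
  have hv' : HasFDerivAt (fun y => ((v y : ℝ) : ℂ)) (Complex.ofRealCLM.comp (fderiv ℝ v x)) x :=
    Complex.ofRealCLM.hasFDerivAt.comp x hv.hasFDerivAt
  have h2 := hu'.sub (hv'.const_mul (Complex.I * ((s:ℝ):ℂ)))
  rw [show fderiv ℝ (fun y => ((u y : ℝ) : ℂ) - Complex.I * ((s : ℝ) : ℂ) * ((v y : ℝ) : ℂ)) x = _ from h2.fderiv]
  simp [smul_eq_mul]

lemma pd_sub {f g : V3 → ℝ} {x : V3} (hf : DifferentiableAt ℝ f x)
    (hg : DifferentiableAt ℝ g x) (k : Fin 3) :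
    pd k (fun y => f y - g y) x = pd k f x - pd k g x := by
  rw [pd, pd, pd, fderiv_fun_sub hf hg]
  rfl

lemma pd_pd_sym {g : V3 → ℝ} (hg : ContDiff ℝ 2 g) (i j : Fin 3) (y : V3) :
    pd i (pd j g) y = pd j (pd i g) y := by
  have hfd : ∀ k : Fin 3, pd k g = fun x => fderiv ℝ g x (Pi.single k 1) := fun k => rfl
  have hdf : DifferentiableAt ℝ (fderiv ℝ g) y :=
    ((hg.fderiv_right (m := 1) (by norm_num)).differentiable (by norm_num)) y
  have key : ∀ a b : Fin 3, pd a (pd b g) y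
      = fderiv ℝ (fderiv ℝ g) y (Pi.single a 1) (Pi.single b 1) := by
    intro a b
    rw [hfd b, pd, fderiv_clm_apply hdf (differentiableAt_const _)]
    simp
  rw [key i j, key j i]
  exact (hg.contDiffAt.isSymmSndFDerivAt (by norm_num)) _ _

lemma dvg_rot_zero {G : V3 → Fin 3 → ℝ} (hG : ∀ k, ContDiff ℝ 2 fun y => G y k) (x : V3) :
    dvg (fun y => rot G y) x = 0 := by
  have hpd : ∀ (a b : Fin 3), DifferentiableAt ℝ (pd a fun y => G y b) x := by
    intro a b
    have : pd a (fun y => G y b) = fun z => fderiv ℝ (fun y => G y b) z (Pi.single a 1) := rfl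
    rw [this]
    exact ((((hG b).fderiv_right (m := 1) (by norm_num)).differentiable (by norm_num)).clm_apply
      (differentiable_const _)) x
  have h0 : (fun y => rot G y 0) = fun y => pd 1 (fun z => G z 2) y - pd 2 (fun z => G z 1) y := by
    funext y; simp [rot]
  have h1 : (fun y => rot G y 1) = fun y => pd 2 (fun z => G z 0) y - pd 0 (fun z => G z 2) y := by
    funext y; simp [rot]
  have h2 : (fun y => rot G y 2) = fun y => pd 0 (fun z => G z 1) y - pd 1 (fun z => G z 0) y := by
    funext y; simp [rot]
  rw [dvg]
  rw [show (fun y => rot G y 0) = _ from h0, show (fun y => rot G y 1) = _ from h1,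
    show (fun y => rot G y 2) = _ from h2]
  rw [pd_sub (hpd 1 2) (hpd 2 1) 0, pd_sub (hpd 2 0) (hpd 0 2) 1, pd_sub (hpd 0 1) (hpd 1 0) 2]
  rw [pd_pd_sym (hG 2) 0 1, pd_pd_sym (hG 1) 0 2, pd_pd_sym (hG 0) 1 2]
  ring

open Filter Topology

lemma schwarz_dir {X : Type*} [NormedAddCommGroup X] [NormedSpace ℝ X] {f g : X → ℝ}
    (hf : Differentiable ℝ f) (hg : ContDiff ℝ 1 g) (v w : X)
    (hfg : ∀ q, fderiv ℝ f q v = g q) (p : X) :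
    HasDerivAt (fun t : ℝ => fderiv ℝ f (p + t • v) w) (fderiv ℝ g p w) 0 := by
  have hgd : Differentiable ℝ g := hg.differentiable (by norm_num)
  set A := fderiv ℝ g p w with hA
  set F := fun t : ℝ => fderiv ℝ f (p + t • v) w with hF
  rw [hasDerivAt_iff_isLittleO, Asymptotics.isLittleO_iff]
  intro ε hε
  -- continuity of q ↦ fderiv g q w at p
  have hcont : Continuous fun q => fderiv ℝ g q w :=
    (hg.continuous_fderiv (by norm_num)).clm_apply continuous_const
  obtain ⟨δ', hδ', hball⟩ := Metric.continuousAt_iff.1 hcont.continuousAt ε hε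
  set K := ‖v‖ + ‖w‖ + 1 with hK
  have hK0 : 0 < K := by positivity
  set δ := δ' / (2 * K) with hδdef
  have hδ : 0 < δ := by positivity
  -- Claim 1
  have claim1 : ∀ σ η : ℝ, |σ| < δ → |η| < δ → ‖fderiv ℝ g (p + σ • v + η • w) w - A‖ ≤ ε := by
    intro σ η hσ hη
    have hd : dist (p + σ • v + η • w) p < δ' := by
      have : p + σ • v + η • w - p = σ • v + η • w := by abel
      rw [dist_eq_norm, this]
      have hb1 : ‖σ • v + η • w‖ ≤ |σ| * ‖v‖ + |η| * ‖w‖ := by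
        calc ‖σ • v + η • w‖ ≤ ‖σ • v‖ + ‖η • w‖ := norm_add_le _ _
          _ = |σ| * ‖v‖ + |η| * ‖w‖ := by
              rw [norm_smul, norm_smul]; simp [Real.norm_eq_abs]
      have hδK : δ * K = δ' / 2 := by
        rw [hδdef]; field_simp
      have hb2 : |σ| * ‖v‖ ≤ δ * ‖v‖ := mul_le_mul_of_nonneg_right hσ.le (norm_nonneg v)
      have hb3 : |η| * ‖w‖ ≤ δ * ‖w‖ := mul_le_mul_of_nonneg_right hη.le (norm_nonneg w)
      have hb4 : δ * ‖v‖ + δ * ‖w‖ = δ * K - δ := by rw [hK]; ring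
      linarith
    have := hball hd
    rw [Real.dist_eq] at this
    exact (le_of_lt this)
  -- Claim 2 : inner mean value
  have claim2 : ∀ σ h : ℝ, |σ| < δ → |h| < δ →
      ‖g (p + σ • v + h • w) - g (p + σ • v) - h * A‖ ≤ ε * |h| := by
    intro σ h hσ hh
    set χ := fun η : ℝ => g (p + σ • v + η • w) - η * A with hχ
    have hχd : ∀ η ∈ Metric.ball (0:ℝ) δ, HasDerivWithinAt χ
        (fderiv ℝ g (p + σ • v + η • w) w - A) (Metric.ball (0:ℝ) δ) η := by
      intro η hη
      have hcurve : HasDerivAt (fun η : ℝ => p + σ • v + η • w) w η := by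
        simpa using ((hasDerivAt_id η).smul_const w).const_add (p + σ • v)
      have h1 : HasDerivAt (fun η : ℝ => g (p + σ • v + η • w))
          (fderiv ℝ g (p + σ • v + η • w) w) η :=
        (hgd _).hasFDerivAt.comp_hasDerivAt η hcurve
      exact ((h1.sub (hasDerivAt_mul_const A))).hasDerivWithinAt
    have hbd : ∀ η ∈ Metric.ball (0:ℝ) δ, ‖fderiv ℝ g (p + σ • v + η • w) w - A‖ ≤ ε := by
      intro η hη
      exact claim1 σ η hσ (by simpa [Metric.mem_ball, Real.dist_eq] using hη)
    have := (convex_ball (0:ℝ) δ).norm_image_sub_le_of_norm_hasDerivWithin_le hχd hbd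
      (Metric.mem_ball_self hδ) (by simpa [Metric.mem_ball, Real.dist_eq] using hh)
    have he : χ h - χ 0 = g (p + σ • v + h • w) - g (p + σ • v) - h * A := by
      simp [hχ]; ring
    rw [he] at this
    simpa using this
  -- Claim 3 : outer mean value
  have claim3 : ∀ t h : ℝ, |t| < δ → |h| < δ →
      ‖f (p + t • v + h • w) - f (p + t • v) - (f (p + h • w) - f p) - t * (h * A)‖
        ≤ ε * |h| * |t| := by
    intro t h ht hh
    set ψ := fun σ : ℝ => f (p + σ • v + h • w) - f (p + σ • v) - σ * (h * A) with hψ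
    have hψd : ∀ σ ∈ Metric.ball (0:ℝ) δ, HasDerivWithinAt ψ
        (g (p + σ • v + h • w) - g (p + σ • v) - h * A) (Metric.ball (0:ℝ) δ) σ := by
      intro σ hσ
      have hcurve1 : HasDerivAt (fun σ : ℝ => p + σ • v + h • w) v σ := by
        simpa using (((hasDerivAt_id σ).smul_const v).const_add p).add_const (h • w)
      have hcurve2 : HasDerivAt (fun σ : ℝ => p + σ • v) v σ := by
        simpa using ((hasDerivAt_id σ).smul_const v).const_add p
      have h1 : HasDerivAt (fun σ : ℝ => f (p + σ • v + h • w))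
          (fderiv ℝ f (p + σ • v + h • w) v) σ :=
        (hf _).hasFDerivAt.comp_hasDerivAt σ hcurve1
      have h2 : HasDerivAt (fun σ : ℝ => f (p + σ • v))
          (fderiv ℝ f (p + σ • v) v) σ :=
        (hf _).hasFDerivAt.comp_hasDerivAt σ hcurve2
      rw [hfg] at h1 h2
      have h3 : HasDerivAt (fun σ : ℝ => σ * (h * A)) (h * A) σ := hasDerivAt_mul_const _
      exact ((h1.sub h2).sub h3).hasDerivWithinAt
    have hbd : ∀ σ ∈ Metric.ball (0:ℝ) δ,
        ‖g (p + σ • v + h • w) - g (p + σ • v) - h * A‖ ≤ ε * |h| := by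
      intro σ hσ
      exact claim2 σ h (by simpa [Metric.mem_ball, Real.dist_eq] using hσ) hh
    have hres : ‖ψ t - ψ 0‖ ≤ ε * |h| * ‖t - 0‖ :=
      (convex_ball (0:ℝ) δ).norm_image_sub_le_of_norm_hasDerivWithin_le hψd hbd
      (Metric.mem_ball_self hδ) (by simpa [Metric.mem_ball, Real.dist_eq] using ht)
    have he : ψ t - ψ 0
        = f (p + t • v + h • w) - f (p + t • v) - (f (p + h • w) - f p) - t * (h * A) := by
      simp [hψ]; ring
    rw [he] at hres
    simpa using hres
  -- final : pass to the limit h → 0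
  rw [Metric.eventually_nhds_iff]
  refine ⟨δ, hδ, fun {t} ht => ?_⟩
  rw [Real.dist_eq, sub_zero] at ht
  have hFt : Tendsto (fun h : ℝ => (f (p + t • v + h • w) - f (p + t • v)) / h)
      (𝓝[≠] 0) (𝓝 (F t)) := by
    have hcurve : HasDerivAt (fun h : ℝ => p + t • v + h • w) w 0 := by
      simpa using ((hasDerivAt_id (0:ℝ)).smul_const w).const_add (p + t • v)
    have h1 : HasDerivAt (fun h : ℝ => f (p + t • v + h • w)) (F t) 0 := by
      have := (hf _).hasFDerivAt.comp_hasDerivAt 0 hcurve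
      simpa [hF, Function.comp_def] using this
    have := hasDerivAt_iff_tendsto_slope.1 h1
    refine this.congr' ?_
    filter_upwards [self_mem_nhdsWithin] with h hh
    simp [slope_def_field, div_eq_inv_mul]
  have hF0 : Tendsto (fun h : ℝ => (f (p + h • w) - f p) / h) (𝓝[≠] 0) (𝓝 (F 0)) := by
    have hcurve : HasDerivAt (fun h : ℝ => p + h • w) w 0 := by
      simpa using ((hasDerivAt_id (0:ℝ)).smul_const w).const_add p
    have h1 : HasDerivAt (fun h : ℝ => f (p + h • w)) (F 0) 0 := by
      have := (hf _).hasFDerivAt.comp_hasDerivAt 0 hcurve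
      simpa [hF, Function.comp_def] using this
    have := hasDerivAt_iff_tendsto_slope.1 h1
    refine this.congr' ?_
    filter_upwards [self_mem_nhdsWithin] with h hh
    simp [slope_def_field, div_eq_inv_mul]
  have hTA : Tendsto (fun _ : ℝ => t * A) (𝓝[≠] (0:ℝ)) (𝓝 (t * A)) := tendsto_const_nhds
  have hL : Tendsto (fun h : ℝ =>
      (f (p + t • v + h • w) - f (p + t • v)) / h - (f (p + h • w) - f p) / h - t * A)
      (𝓝[≠] 0) (𝓝 (F t - F 0 - t * A)) := (hFt.sub hF0).sub hTA
  have hLnorm : Tendsto (fun h : ℝ =>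
      ‖(f (p + t • v + h • w) - f (p + t • v)) / h - (f (p + h • w) - f p) / h - t * A‖)
      (𝓝[≠] 0) (𝓝 ‖F t - F 0 - t * A‖) := hL.norm
  have hbound : ∀ᶠ h in 𝓝[≠] (0:ℝ),
      ‖(f (p + t • v + h • w) - f (p + t • v)) / h - (f (p + h • w) - f p) / h - t * A‖
        ≤ ε * |t| := by
    have hmem : Metric.ball (0:ℝ) δ ∈ 𝓝 (0:ℝ) := Metric.ball_mem_nhds _ hδ
    filter_upwards [nhdsWithin_le_nhds hmem, self_mem_nhdsWithin] with h hhδ hh0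
    have hhδ' : |h| < δ := by simpa [Real.dist_eq] using hhδ
    have hh0' : h ≠ 0 := hh0
    have := claim3 t h ht hhδ'
    have heq : (f (p + t • v + h • w) - f (p + t • v)) / h - (f (p + h • w) - f p) / h - t * A
        = (f (p + t • v + h • w) - f (p + t • v) - (f (p + h • w) - f p) - t * (h * A)) / h := by
      field_simp
    rw [heq, norm_div]
    rw [div_le_iff₀ (by simpa [Real.norm_eq_abs] using abs_pos.2 hh0')]
    calc ‖f (p + t • v + h • w) - f (p + t • v) - (f (p + h • w) - f p) - t * (h * A)‖
        ≤ ε * |h| * |t| := this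
      _ = ε * |t| * ‖h‖ := by rw [Real.norm_eq_abs]; ring
  have hfinal : ‖F t - F 0 - t * A‖ ≤ ε * |t| :=
    le_of_tendsto hLnorm hbound
  calc ‖F t - F 0 - (t - 0) • A‖ = ‖F t - F 0 - t * A‖ := by rw [sub_zero]; rfl
    _ ≤ ε * |t| := hfinal
    _ = ε * ‖t - 0‖ := by rw [sub_zero, Real.norm_eq_abs]

lemma contDiff_dvgT {E : ℝ × V3 → Fin 3 → ℝ} (hE : ∀ k, ContDiff ℝ 2 fun p => E p k) :
    ContDiff ℝ 1 (dvgT E) := by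
  have h : dvgT E = fun q : ℝ × V3 => pd 0 (fun y => E (q.1, y) 0) q.2
      + pd 1 (fun y => E (q.1, y) 1) q.2 + pd 2 (fun y => E (q.1, y) 2) q.2 := rfl
  rw [h]
  exact ((contDiff_pdS (hE 0) 0).add (contDiff_pdS (hE 1) 1)).add (contDiff_pdS (hE 2) 2)

lemma rotT0_def (E : ℝ × V3 → Fin 3 → ℝ) (q : ℝ × V3) :
    rotT E 0 q = pd 1 (fun y => E (q.1, y) 2) q.2 - pd 2 (fun y => E (q.1, y) 1) q.2 := by
  simp [rotT, rot]

lemma rotT1_def (E : ℝ × V3 → Fin 3 → ℝ) (q : ℝ × V3) :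
    rotT E 1 q = pd 2 (fun y => E (q.1, y) 0) q.2 - pd 0 (fun y => E (q.1, y) 2) q.2 := by
  simp [rotT, rot]

lemma rotT2_def (E : ℝ × V3 → Fin 3 → ℝ) (q : ℝ × V3) :
    rotT E 2 q = pd 0 (fun y => E (q.1, y) 1) q.2 - pd 1 (fun y => E (q.1, y) 0) q.2 := by
  simp [rotT, rot]

lemma contDiff_rotT {E : ℝ × V3 → Fin 3 → ℝ} (hE : ∀ k, ContDiff ℝ 2 fun p => E p k)
    (k : Fin 3) : ContDiff ℝ 1 (rotT E k) := by
  fin_cases k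
  · show ContDiff ℝ 1 (rotT E 0)
    rw [show rotT E 0 = fun q => pd 1 (fun y => E (q.1, y) 2) q.2
        - pd 2 (fun y => E (q.1, y) 1) q.2 from funext fun q => rotT0_def E q]
    exact (contDiff_pdS (hE 2) 1).sub (contDiff_pdS (hE 1) 2)
  · show ContDiff ℝ 1 (rotT E 1)
    rw [show rotT E 1 = fun q => pd 2 (fun y => E (q.1, y) 0) q.2
        - pd 0 (fun y => E (q.1, y) 2) q.2 from funext fun q => rotT1_def E q]
    exact (contDiff_pdS (hE 0) 2).sub (contDiff_pdS (hE 2) 0)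
  · show ContDiff ℝ 1 (rotT E 2)
    rw [show rotT E 2 = fun q => pd 0 (fun y => E (q.1, y) 1) q.2
        - pd 1 (fun y => E (q.1, y) 0) q.2 from funext fun q => rotT2_def E q]
    exact (contDiff_pdS (hE 1) 0).sub (contDiff_pdS (hE 0) 1)

lemma qmul_mk (a b c d a' b' c' d' : ℂ) :
    ((⟨a, b, c, d⟩ : HC) * ⟨a', b', c', d'⟩) =
      (⟨a * a' - b * b' - c * c' - d * d', a * b' + b * a' + c * d' - d * c',
        a * c' - b * d' + c * a' + d * b', a * d' + b * c' - c * b' + d * a'⟩ : HC) := by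
  apply Quaternion.ext
  · erw [Quaternion.re_mul]
  · erw [Quaternion.imI_mul]
  · erw [Quaternion.imJ_mul]
  · erw [Quaternion.imK_mul]

lemma qadd_mk (a b c d a' b' c' d' : ℂ) :
    ((⟨a, b, c, d⟩ : HC) + ⟨a', b', c', d'⟩) = (⟨a + a', b + b', c + c', d + d'⟩ : HC) := rfl

lemma qsub_mk (a b c d a' b' c' d' : ℂ) :
    ((⟨a, b, c, d⟩ : HC) - ⟨a', b', c', d'⟩) = (⟨a - a', b - b', c - c', d - d'⟩ : HC) := rfl

lemma qsmul_mk (r a b c d : ℂ) :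
    (r • (⟨a, b, c, d⟩ : HC)) = (⟨r * a, r * b, r * c, r * d⟩ : HC) := rfl

lemma mop_formula (ε μ β : ℝ) (E H : ℝ × V3 → Fin 3 → ℝ)
    (hE : ∀ k, ContDiff ℝ 2 fun p => E p k) (hH : ∀ k, ContDiff ℝ 2 fun p => H p k)
    (p : ℝ × V3) :
    Mop ε μ β (Vfield ε μ E H) p =
      ⟨(↑(-(β * Real.sqrt (ε * μ)) * pdt (dvgT E) p + Real.sqrt (μ / ε) * dvgT H p) : ℂ)
          + Complex.I * ↑(β * Real.sqrt (ε * μ) * Real.sqrt (μ / ε) * pdt (dvgT H) p + dvgT E p),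
        ↑(β * Real.sqrt (ε * μ) * pdt (rotT E 0) p + Real.sqrt (ε * μ) * pdt (fun q => E q 0) p
            - Real.sqrt (μ / ε) * rotT H 0 p)
          + Complex.I * ↑(-(β * Real.sqrt (ε * μ) * Real.sqrt (μ / ε) * pdt (rotT H 0) p
            + Real.sqrt (ε * μ) * Real.sqrt (μ / ε) * pdt (fun q => H q 0) p + rotT E 0 p)),
        ↑(β * Real.sqrt (ε * μ) * pdt (rotT E 1) p + Real.sqrt (ε * μ) * pdt (fun q => E q 1) p
            - Real.sqrt (μ / ε) * rotT H 1 p)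
          + Complex.I * ↑(-(β * Real.sqrt (ε * μ) * Real.sqrt (μ / ε) * pdt (rotT H 1) p
            + Real.sqrt (ε * μ) * Real.sqrt (μ / ε) * pdt (fun q => H q 1) p + rotT E 1 p)),
        ↑(β * Real.sqrt (ε * μ) * pdt (rotT E 2) p + Real.sqrt (ε * μ) * pdt (fun q => E q 2) p
            - Real.sqrt (μ / ε) * rotT H 2 p)
          + Complex.I * ↑(-(β * Real.sqrt (ε * μ) * Real.sqrt (μ / ε) * pdt (rotT H 2) p
            + Real.sqrt (ε * μ) * Real.sqrt (μ / ε) * pdt (fun q => H q 2) p + rotT E 2 p))⟩ := by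
  have hEd : ∀ k, Differentiable ℝ fun q => E q k := fun k => (hE k).differentiable (by norm_num)
  have hHd : ∀ k, Differentiable ℝ fun q => H q k := fun k => (hH k).differentiable (by norm_num)
  set s := Real.sqrt (μ / ε) with hs
  set c := Real.sqrt (ε * μ) with hc
  -- Step 1 : spatial quaternionic partials of V
  have hqpd : ∀ (t : ℝ) (x : V3) (k : Fin 3),
      qpd k (fun y => Vfield ε μ E H (t, y)) x =
        ⟨0,
         ↑(pd k (fun y => E (t, y) 0) x) - Complex.I * ↑s * ↑(pd k (fun y => H (t, y) 0) x),
         ↑(pd k (fun y => E (t, y) 1) x) - Complex.I * ↑s * ↑(pd k (fun y => H (t, y) 1) x),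
         ↑(pd k (fun y => E (t, y) 2) x) - Complex.I * ↑s * ↑(pd k (fun y => H (t, y) 2) x)⟩ := by
    intro t x k
    rw [qpd]
    congr 1
    · show pd k (fun y => (Vfield ε μ E H (t, y)).re) x = 0
      rw [show (fun y => (Vfield ε μ E H (t, y)).re) = fun _ => (0 : ℂ) from rfl]
      simp [pd]
    · exact fdC (sliceDiffAt (hEd 0 (t, x))) (sliceDiffAt (hHd 0 (t, x))) s _
    · exact fdC (sliceDiffAt (hEd 1 (t, x))) (sliceDiffAt (hHd 1 (t, x))) s _
    · exact fdC (sliceDiffAt (hEd 2 (t, x))) (sliceDiffAt (hHd 2 (t, x))) s _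
  -- Step 2 : Dirac operator of V
  have hDqT : ∀ q : ℝ × V3, DqT (Vfield ε μ E H) q =
      ⟨-(↑(dvgT E q) - Complex.I * ↑s * ↑(dvgT H q)),
       ↑(rotT E 0 q) - Complex.I * ↑s * ↑(rotT H 0 q),
       ↑(rotT E 1 q) - Complex.I * ↑s * ↑(rotT H 1 q),
       ↑(rotT E 2 q) - Complex.I * ↑s * ↑(rotT H 2 q)⟩ := by
    intro q
    show Dq (fun y => Vfield ε μ E H (q.1, y)) q.2 = _
    rw [Dq, hqpd q.1 q.2 0, hqpd q.1 q.2 1, hqpd q.1 q.2 2, e1, e2, e3]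
    rw [show dvgT E q = pd 0 (fun y => E (q.1, y) 0) q.2 + pd 1 (fun y => E (q.1, y) 1) q.2
        + pd 2 (fun y => E (q.1, y) 2) q.2 from rfl,
      show dvgT H q = pd 0 (fun y => H (q.1, y) 0) q.2 + pd 1 (fun y => H (q.1, y) 1) q.2
        + pd 2 (fun y => H (q.1, y) 2) q.2 from rfl,
      rotT0_def E q, rotT1_def E q, rotT2_def E q, rotT0_def H q, rotT1_def H q, rotT2_def H q]
    erw [qmul_mk, qmul_mk, qmul_mk, qadd_mk]
    apply Quaternion.ext <;>
      simp only [qmul_mk, qadd_mk, Quaternion.re_mul, Quaternion.imI_mul, Quaternion.imJ_mul, Quaternion.imK_mul,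
        Quaternion.re_add, Quaternion.imI_add, Quaternion.imJ_add, Quaternion.imK_add,
        Quaternion.re_neg, Quaternion.imI_neg, Quaternion.imJ_neg, Quaternion.imK_neg] <;>
      push_cast <;> ring
  -- differentiability of the derived scalar fields
  have hdE : Differentiable ℝ (dvgT E) := (contDiff_dvgT hE).differentiable (by norm_num)
  have hdH : Differentiable ℝ (dvgT H) := (contDiff_dvgT hH).differentiable (by norm_num)
  have hrE : ∀ k, Differentiable ℝ (rotT E k) :=
    fun k => (contDiff_rotT hE k).differentiable (by norm_num)
  have hrH : ∀ k, Differentiable ℝ (rotT H k) :=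
    fun k => (contDiff_rotT hH k).differentiable (by norm_num)
  -- Step 3 : time derivative of DqT V
  have hqpdtD : qpdt (DqT (Vfield ε μ E H)) p =
      ⟨-((↑(pdt (dvgT E) p) : ℂ) - Complex.I * ↑s * ↑(pdt (dvgT H) p)),
       ↑(pdt (rotT E 0) p) - Complex.I * ↑s * ↑(pdt (rotT H 0) p),
       ↑(pdt (rotT E 1) p) - Complex.I * ↑s * ↑(pdt (rotT H 1) p),
       ↑(pdt (rotT E 2) p) - Complex.I * ↑s * ↑(pdt (rotT H 2) p)⟩ := by
    rw [qpdt]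
    congr 1
    · show pdt (fun q => (DqT (Vfield ε μ E H) q).re) p = _
      rw [show (fun q => (DqT (Vfield ε μ E H) q).re)
          = fun q => -((↑(dvgT E q) : ℂ) - Complex.I * ↑s * ↑(dvgT H q)) from
          funext fun q => by rw [hDqT q]]
      rw [pdt, fderiv_fun_neg, ContinuousLinearMap.neg_apply,
        show (fderiv ℝ (fun q => (↑(dvgT E q) : ℂ) - Complex.I * ↑s * ↑(dvgT H q)) p) (1, 0)
          = _ from fdC (hdE p) (hdH p) s _]
      rfl
    · show pdt (fun q => (DqT (Vfield ε μ E H) q).imI) p = _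
      rw [show (fun q => (DqT (Vfield ε μ E H) q).imI)
          = fun q => (↑(rotT E 0 q) : ℂ) - Complex.I * ↑s * ↑(rotT H 0 q) from
          funext fun q => by rw [hDqT q]]
      exact fdC (hrE 0 p) (hrH 0 p) s _
    · show pdt (fun q => (DqT (Vfield ε μ E H) q).imJ) p = _
      rw [show (fun q => (DqT (Vfield ε μ E H) q).imJ)
          = fun q => (↑(rotT E 1 q) : ℂ) - Complex.I * ↑s * ↑(rotT H 1 q) from
          funext fun q => by rw [hDqT q]]
      exact fdC (hrE 1 p) (hrH 1 p) s _
    · show pdt (fun q => (DqT (Vfield ε μ E H) q).imK) p = _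
      rw [show (fun q => (DqT (Vfield ε μ E H) q).imK)
          = fun q => (↑(rotT E 2 q) : ℂ) - Complex.I * ↑s * ↑(rotT H 2 q) from
          funext fun q => by rw [hDqT q]]
      exact fdC (hrE 2 p) (hrH 2 p) s _
  -- Step 4 : time derivative of V
  have hqpdtV : qpdt (Vfield ε μ E H) p =
      ⟨0,
       (↑(pdt (fun q => E q 0) p) : ℂ) - Complex.I * ↑s * ↑(pdt (fun q => H q 0) p),
       ↑(pdt (fun q => E q 1) p) - Complex.I * ↑s * ↑(pdt (fun q => H q 1) p),
       ↑(pdt (fun q => E q 2) p) - Complex.I * ↑s * ↑(pdt (fun q => H q 2) p)⟩ := by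
    rw [qpdt]
    congr 1
    · show pdt (fun q => (Vfield ε μ E H q).re) p = 0
      rw [show (fun q => (Vfield ε μ E H q).re) = fun _ => (0 : ℂ) from rfl]
      simp [pdt]
    · exact fdC (hEd 0 p) (hHd 0 p) s _
    · exact fdC (hEd 1 p) (hHd 1 p) s _
    · exact fdC (hEd 2 p) (hHd 2 p) s _
  -- Step 5 : assemble
  rw [Mop, hqpdtD, hqpdtV, hDqT p]
  erw [qsmul_mk, qsmul_mk, qsmul_mk, qadd_mk, qsub_mk]
  apply Quaternion.ext <;>
    simp only [qsmul_mk, qadd_mk, qsub_mk, Quaternion.re_smul, Quaternion.imI_smul, Quaternion.imJ_smul, Quaternion.imK_smul,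
      Quaternion.re_add, Quaternion.imI_add, Quaternion.imJ_add, Quaternion.imK_add,
      Quaternion.re_sub, Quaternion.imI_sub, Quaternion.imJ_sub, Quaternion.imK_sub,
      smul_eq_mul] <;>
    apply Complex.ext <;>
    simp only [Complex.add_re, Complex.add_im, Complex.sub_re, Complex.sub_im, Complex.mul_re,
      Complex.mul_im, Complex.neg_re, Complex.neg_im, Complex.I_re, Complex.I_im,
      Complex.ofReal_re, Complex.ofReal_im, Complex.zero_re, Complex.zero_im,
      mul_zero, zero_mul] <;>
    push_cast <;>
    ring

lemma ceq1 {a b a' b' : ℝ} :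
    ((a : ℂ) + Complex.I * (b : ℂ) = (a' : ℂ) + Complex.I * (b' : ℂ)) ↔ (a = a' ∧ b = b') := by
  constructor
  · intro h
    rw [Complex.ext_iff] at h
    simpa using h
  · rintro ⟨rfl, rfl⟩; rfl

lemma ceq2 {a b c : ℝ} :
    ((a : ℂ) + Complex.I * (b : ℂ) = (c : ℂ)) ↔ (a = c ∧ b = 0) := by
  constructor
  · intro h
    rw [Complex.ext_iff] at h
    simpa using h
  · rintro ⟨rfl, h⟩; simp [h]

lemma pdt_pi {F : ℝ × V3 → Fin 3 → ℝ} {p : ℝ × V3}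
    (hF : ∀ k, DifferentiableAt ℝ (fun q => F q k) p) :
    pdt F p = fun k => pdt (fun q => F q k) p := by
  have h : fderiv ℝ F p = ContinuousLinearMap.pi fun i => fderiv ℝ (fun q => F q i) p :=
    fderiv_pi hF
  rw [pdt, h]
  rfl

lemma sliceC2 {u : ℝ × V3 → ℝ} (hu : ContDiff ℝ 2 u) (t : ℝ) :
    ContDiff ℝ 2 fun y => u (t, y) :=
  hu.comp (ContDiff.prodMk contDiff_const contDiff_id)

lemma rhs_formula (sv β εv : ℝ) (jf : Fin 3 → ℝ) (pr rr : ℝ) :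
    scq (((-(β * sv) * pr : ℝ) : ℂ) + Complex.I * ((rr / εv : ℝ) : ℂ))
        + (vecq fun k => ((-sv * jf k : ℝ) : ℂ))
      = ⟨((-(β * sv) * pr : ℝ) : ℂ) + Complex.I * ((rr / εv : ℝ) : ℂ),
          ((-sv * jf 0 : ℝ) : ℂ), ((-sv * jf 1 : ℝ) : ℂ), ((-sv * jf 2 : ℝ) : ℂ)⟩ := by
  apply Quaternion.ext <;> simp only [Quaternion.re_add, Quaternion.imI_add, Quaternion.imJ_add, Quaternion.imK_add] <;> simp [scq, vecq]

lemma key_div (ε β : ℝ) {E H j : ℝ × V3 → Fin 3 → ℝ} {ρ : ℝ × V3 → ℝ}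
    (hE : ∀ k, ContDiff ℝ 2 fun p => E p k) (hH : ∀ k, ContDiff ℝ 2 fun p => H p k)
    (hj : ∀ k, ContDiff ℝ 1 fun p => j p k) (hρ : ContDiff ℝ 1 ρ)
    (hcont : ∀ p : ℝ × V3, pdt ρ p + dvg (fun y => j (p.1, y)) p.2 = 0)
    (hM1 : ∀ (q : ℝ × V3) (k : Fin 3),
      rotT H k q = ε * (pdt (fun q' => E q' k) q + β * pdt (rotT E k) q) + j q k)
    (p : ℝ × V3) : ε * pdt (dvgT E) p = pdt ρ p := by
  have hEd : ∀ k, Differentiable ℝ fun q => E q k := fun k => (hE k).differentiable (by norm_num)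
  have hrEd : ∀ k, Differentiable ℝ (rotT E k) :=
    fun k => (contDiff_rotT hE k).differentiable (by norm_num)
  have hrHd : ∀ k, Differentiable ℝ (rotT H k) :=
    fun k => (contDiff_rotT hH k).differentiable (by norm_num)
  have hjd : ∀ k, Differentiable ℝ fun q => j q k := fun k => (hj k).differentiable (by norm_num)
  have hdE : Differentiable ℝ (dvgT E) := (contDiff_dvgT hE).differentiable (by norm_num)
  set v : ℝ × V3 := ((1 : ℝ), (0 : V3)) with hv
  have hveq : ∀ (f : ℝ × V3 → ℝ) (q : ℝ × V3), fderiv ℝ f q v = pdt f q := fun f q => rfl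
  set w : Fin 3 → ℝ × V3 := fun k => ((0 : ℝ), Pi.single k (1 : ℝ)) with hw
  set P : Fin 3 → ℝ × V3 → ℝ := fun k q => ε * E q k + ε * β * rotT E k q with hP
  set Q : Fin 3 → ℝ × V3 → ℝ := fun k q => rotT H k q - j q k with hQ
  have hPfd : ∀ (k : Fin 3) (q : ℝ × V3), fderiv ℝ (P k) q
      = ε • fderiv ℝ (fun q' => E q' k) q + (ε * β) • fderiv ℝ (rotT E k) q := by
    intro k q
    exact (((hEd k q).hasFDerivAt.const_mul ε).add
      (((hrEd k) q).hasFDerivAt.const_mul (ε * β))).fderiv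
  have hPdiff : ∀ k, Differentiable ℝ (P k) := by
    intro k q
    exact (((hEd k q).const_mul ε).add ((hrEd k q).const_mul (ε * β)))
  have hPc1 : ∀ k, ContDiff ℝ 1 (P k) := by
    intro k
    exact (contDiff_const.mul ((hE k).of_le one_le_two)).add
      (contDiff_const.mul (contDiff_rotT hE k))
  have hQc1 : ∀ k, ContDiff ℝ 1 (Q k) := fun k => (contDiff_rotT hH k).sub (hj k)
  have hPt : ∀ (k : Fin 3) (q : ℝ × V3), fderiv ℝ (P k) q v = Q k q := by
    intro k q
    rw [hPfd k q]
    simp only [ContinuousLinearMap.add_apply, ContinuousLinearMap.coe_smul',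
      Pi.smul_apply, smul_eq_mul]
    rw [hveq, hveq, hQ]
    linear_combination -(hM1 q k)
  have hS : ∀ k : Fin 3, HasDerivAt (fun t : ℝ => fderiv ℝ (P k) (p + t • v) (w k))
      (fderiv ℝ (Q k) p (w k)) 0 :=
    fun k => schwarz_dir (hPdiff k) (hQc1 k) v (w k) (fun q => hPt k q) p
  have hsum : HasDerivAt (fun t : ℝ => fderiv ℝ (P 0) (p + t • v) (w 0)
        + fderiv ℝ (P 1) (p + t • v) (w 1) + fderiv ℝ (P 2) (p + t • v) (w 2))
      (fderiv ℝ (Q 0) p (w 0) + fderiv ℝ (Q 1) p (w 1) + fderiv ℝ (Q 2) p (w 2)) 0 :=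
    ((hS 0).add (hS 1)).add (hS 2)
  -- identify the function with ε * div E along the line
  have hfe : ∀ q : ℝ × V3, fderiv ℝ (P 0) q (w 0) + fderiv ℝ (P 1) q (w 1)
      + fderiv ℝ (P 2) q (w 2) = ε * dvgT E q := by
    intro q
    rw [hPfd 0 q, hPfd 1 q, hPfd 2 q]
    simp only [ContinuousLinearMap.add_apply, ContinuousLinearMap.coe_smul',
      Pi.smul_apply, smul_eq_mul]
    have hE0 : fderiv ℝ (fun q' => E q' 0) q (w 0)
        = pd 0 (fun y => E (q.1, y) 0) q.2 := (pdS_eq (hEd 0 q) 0).symm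
    have hE1 : fderiv ℝ (fun q' => E q' 1) q (w 1)
        = pd 1 (fun y => E (q.1, y) 1) q.2 := (pdS_eq (hEd 1 q) 1).symm
    have hE2 : fderiv ℝ (fun q' => E q' 2) q (w 2)
        = pd 2 (fun y => E (q.1, y) 2) q.2 := (pdS_eq (hEd 2 q) 2).symm
    have hR0 : fderiv ℝ (rotT E 0) q (w 0)
        = pd 0 (fun y => rotT E 0 (q.1, y)) q.2 := (pdS_eq (hrEd 0 q) 0).symm
    have hR1 : fderiv ℝ (rotT E 1) q (w 1)
        = pd 1 (fun y => rotT E 1 (q.1, y)) q.2 := (pdS_eq (hrEd 1 q) 1).symm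
    have hR2 : fderiv ℝ (rotT E 2) q (w 2)
        = pd 2 (fun y => rotT E 2 (q.1, y)) q.2 := (pdS_eq (hrEd 2 q) 2).symm
    rw [hE0, hE1, hE2, hR0, hR1, hR2]
    have hrot : pd 0 (fun y => rotT E 0 (q.1, y)) q.2 + pd 1 (fun y => rotT E 1 (q.1, y)) q.2
        + pd 2 (fun y => rotT E 2 (q.1, y)) q.2 = 0 :=
      dvg_rot_zero (G := fun y => E (q.1, y)) (fun k => sliceC2 (hE k) q.1) q.2
    rw [show dvgT E q = pd 0 (fun y => E (q.1, y) 0) q.2 + pd 1 (fun y => E (q.1, y) 1) q.2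
      + pd 2 (fun y => E (q.1, y) 2) q.2 from rfl]
    linear_combination (ε * β) * hrot
  have hcurve : HasDerivAt (fun t : ℝ => p + t • v) v 0 := by
    simpa using ((hasDerivAt_id (0 : ℝ)).smul_const v).const_add p
  have hline : HasDerivAt (fun t : ℝ => ε * dvgT E (p + t • v)) (ε * pdt (dvgT E) p) 0 := by
    have h1 : HasDerivAt (fun t : ℝ => dvgT E (p + t • v)) (pdt (dvgT E) p) 0 := by
      have h := (hdE (p + (0 : ℝ) • v)).hasFDerivAt.comp_hasDerivAt 0 hcurve
      rw [show p + (0 : ℝ) • v = p by simp] at h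
      rw [← hveq (dvgT E) p]
      exact h
    exact h1.const_mul ε
  have hEqfun : (fun t : ℝ => fderiv ℝ (P 0) (p + t • v) (w 0)
      + fderiv ℝ (P 1) (p + t • v) (w 1) + fderiv ℝ (P 2) (p + t • v) (w 2))
      = fun t : ℝ => ε * dvgT E (p + t • v) := funext fun t => hfe _
  rw [hEqfun] at hsum
  have huniq : fderiv ℝ (Q 0) p (w 0) + fderiv ℝ (Q 1) p (w 1) + fderiv ℝ (Q 2) p (w 2)
      = ε * pdt (dvgT E) p := hsum.unique hline
  -- compute the right-hand side
  have hQfd : ∀ k : Fin 3, fderiv ℝ (Q k) p (w k)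
      = fderiv ℝ (rotT H k) p (w k) - fderiv ℝ (fun q => j q k) p (w k) := by
    intro k
    rw [hQ, fderiv_fun_sub (hrHd k p) (hjd k p)]
    rfl
  have hH0 : fderiv ℝ (rotT H 0) p (w 0)
      = pd 0 (fun y => rotT H 0 (p.1, y)) p.2 := (pdS_eq (hrHd 0 p) 0).symm
  have hH1 : fderiv ℝ (rotT H 1) p (w 1)
      = pd 1 (fun y => rotT H 1 (p.1, y)) p.2 := (pdS_eq (hrHd 1 p) 1).symm
  have hH2 : fderiv ℝ (rotT H 2) p (w 2)
      = pd 2 (fun y => rotT H 2 (p.1, y)) p.2 := (pdS_eq (hrHd 2 p) 2).symm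
  have hj0 : fderiv ℝ (fun q => j q 0) p (w 0)
      = pd 0 (fun y => j (p.1, y) 0) p.2 := (pdS_eq (hjd 0 p) 0).symm
  have hj1 : fderiv ℝ (fun q => j q 1) p (w 1)
      = pd 1 (fun y => j (p.1, y) 1) p.2 := (pdS_eq (hjd 1 p) 1).symm
  have hj2 : fderiv ℝ (fun q => j q 2) p (w 2)
      = pd 2 (fun y => j (p.1, y) 2) p.2 := (pdS_eq (hjd 2 p) 2).symm
  have hrotH : pd 0 (fun y => rotT H 0 (p.1, y)) p.2 + pd 1 (fun y => rotT H 1 (p.1, y)) p.2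
      + pd 2 (fun y => rotT H 2 (p.1, y)) p.2 = 0 :=
    dvg_rot_zero (G := fun y => H (p.1, y)) (fun k => sliceC2 (hH k) p.1) p.2
  have hjsum : pd 0 (fun y => j (p.1, y) 0) p.2 + pd 1 (fun y => j (p.1, y) 1) p.2
      + pd 2 (fun y => j (p.1, y) 2) p.2 = -(pdt ρ p) := by
    have h := hcont p
    rw [show dvg (fun y => j (p.1, y)) p.2 = pd 0 (fun y => j (p.1, y) 0) p.2
      + pd 1 (fun y => j (p.1, y) 1) p.2 + pd 2 (fun y => j (p.1, y) 2) p.2 from rfl] at h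
    linarith
  rw [hQfd 0, hQfd 1, hQfd 2, hH0, hH1, hH2, hj0, hj1, hj2] at huniq
  linarith [huniq, hrotH, hjsum]

/-- MV = -√(μ/ε)j - β√(μ/ε)∂ₜρ + iρ/ε is equivalent to the
time-dependent chiral Maxwell system. -/
theorem stmt6 (ε μ β : ℝ) (hε : 0 < ε) (hμ : 0 < μ) (hβ : 0 < β)
    (E H j : ℝ × V3 → Fin 3 → ℝ) (ρ : ℝ × V3 → ℝ)
    (hE : ∀ k, ContDiff ℝ 2 fun p => E p k) (hH : ∀ k, ContDiff ℝ 2 fun p => H p k)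
    (hj : ∀ k, ContDiff ℝ 1 fun p => j p k) (hρ : ContDiff ℝ 1 ρ)
    (hcont : ∀ p : ℝ × V3, pdt ρ p + dvg (fun y => j (p.1, y)) p.2 = 0) :
    (∀ p : ℝ × V3,
      Mop ε μ β (Vfield ε μ E H) p
        = scq (((-(β * Real.sqrt (μ / ε)) * pdt ρ p : ℝ) : ℂ)
            + Complex.I * ((ρ p / ε : ℝ) : ℂ))
          + vecq fun k => ((-(Real.sqrt (μ / ε)) * j p k : ℝ) : ℂ))
    ↔
    (∀ p : ℝ × V3,
      (rot (fun y => H (p.1, y)) p.2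
        = ε • (pdt E p + β • pdt (fun q => rot (fun y => E (q.1, y)) q.2) p) + j p) ∧
      (rot (fun y => E (p.1, y)) p.2
        = -(μ • (pdt H p + β • pdt (fun q => rot (fun y => H (q.1, y)) q.2) p))) ∧
      dvg (fun y => E (p.1, y)) p.2 = ρ p / ε ∧
      dvg (fun y => H (p.1, y)) p.2 = 0) := by
  set s := Real.sqrt (μ / ε) with hsdef
  set c := Real.sqrt (ε * μ) with hcdef
  have hs0 : 0 < s := Real.sqrt_pos.2 (div_pos hμ hε)
  have hcs : c = ε * s := by
    rw [hsdef, hcdef]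
    rw [show ε * Real.sqrt (μ / ε) = Real.sqrt (ε ^ 2) * Real.sqrt (μ / ε) by
      rw [Real.sqrt_sq hε.le]]
    rw [← Real.sqrt_mul (sq_nonneg ε)]
    congr 1
    field_simp
  have hμcs : c * s = μ := by
    rw [hsdef, hcdef, ← Real.sqrt_mul (mul_pos hε hμ).le]
    rw [show ε * μ * (μ / ε) = μ ^ 2 by field_simp]
    exact Real.sqrt_sq hμ.le
  have hEd : ∀ k, Differentiable ℝ fun q => E q k := fun k => (hE k).differentiable (by norm_num)
  have hHd : ∀ k, Differentiable ℝ fun q => H q k := fun k => (hH k).differentiable (by norm_num)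
  have hrEd : ∀ k, Differentiable ℝ (rotT E k) :=
    fun k => (contDiff_rotT hE k).differentiable (by norm_num)
  have hrHd : ∀ k, Differentiable ℝ (rotT H k) :=
    fun k => (contDiff_rotT hH k).differentiable (by norm_num)
  have hMop := mop_formula ε μ β E H hE hH
  have mopiff : ∀ p : ℝ × V3,
      (Mop ε μ β (Vfield ε μ E H) p
        = scq (((-(β * s) * pdt ρ p : ℝ) : ℂ) + Complex.I * ((ρ p / ε : ℝ) : ℂ))
          + vecq fun k => ((-s * j p k : ℝ) : ℂ))
      ↔ ((-(β * c) * pdt (dvgT E) p + s * dvgT H p = -(β * s) * pdt ρ p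
            ∧ β * c * s * pdt (dvgT H) p + dvgT E p = ρ p / ε)
         ∧ (β * c * pdt (rotT E 0) p + c * pdt (fun q => E q 0) p - s * rotT H 0 p = -s * j p 0
            ∧ -(β * c * s * pdt (rotT H 0) p + c * s * pdt (fun q => H q 0) p + rotT E 0 p) = 0)
         ∧ (β * c * pdt (rotT E 1) p + c * pdt (fun q => E q 1) p - s * rotT H 1 p = -s * j p 1
            ∧ -(β * c * s * pdt (rotT H 1) p + c * s * pdt (fun q => H q 1) p + rotT E 1 p) = 0)
         ∧ (β * c * pdt (rotT E 2) p + c * pdt (fun q => E q 2) p - s * rotT H 2 p = -s * j p 2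
            ∧ -(β * c * s * pdt (rotT H 2) p + c * s * pdt (fun q => H q 2) p + rotT E 2 p)
              = 0)) := by
    intro p
    rw [hMop p, rhs_formula s β ε (j p) (pdt ρ p) (ρ p)]
    erw [QuaternionAlgebra.mk.injEq]
    rw [ceq1, ceq2, ceq2, ceq2]
  have hpdtE : ∀ p : ℝ × V3, pdt E p = fun k => pdt (fun q => E q k) p :=
    fun p => pdt_pi fun k => hEd k p
  have hpdtH : ∀ p : ℝ × V3, pdt H p = fun k => pdt (fun q => H q k) p :=
    fun p => pdt_pi fun k => hHd k p
  have hpdtRE : ∀ p : ℝ × V3, pdt (fun q => rot (fun y => E (q.1, y)) q.2) p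
      = fun k => pdt (rotT E k) p := fun p => pdt_pi fun k => hrEd k p
  have hpdtRH : ∀ p : ℝ × V3, pdt (fun q => rot (fun y => H (q.1, y)) q.2) p
      = fun k => pdt (rotT H k) p := fun p => pdt_pi fun k => hrHd k p
  have mxiff : ∀ p : ℝ × V3,
      ((rot (fun y => H (p.1, y)) p.2
        = ε • (pdt E p + β • pdt (fun q => rot (fun y => E (q.1, y)) q.2) p) + j p) ∧
      (rot (fun y => E (p.1, y)) p.2
        = -(μ • (pdt H p + β • pdt (fun q => rot (fun y => H (q.1, y)) q.2) p))) ∧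
      dvg (fun y => E (p.1, y)) p.2 = ρ p / ε ∧
      dvg (fun y => H (p.1, y)) p.2 = 0)
      ↔ ((∀ k, rotT H k p = ε * (pdt (fun q => E q k) p + β * pdt (rotT E k) p) + j p k)
         ∧ (∀ k, rotT E k p = -(μ * (pdt (fun q => H q k) p + β * pdt (rotT H k) p)))
         ∧ dvgT E p = ρ p / ε ∧ dvgT H p = 0) := by
    intro p
    constructor
    · rintro ⟨h1, h2, h3, h4⟩
      refine ⟨fun k => ?_, fun k => ?_, h3, h4⟩
      · have h := congrFun h1 k
        rw [hpdtE p, hpdtRE p] at h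
        simp only [Pi.add_apply, Pi.smul_apply, smul_eq_mul] at h
        show rot (fun y => H (p.1, y)) p.2 k
          = ε * (pdt (fun q => E q k) p + β * pdt (rotT E k) p) + j p k
        linear_combination h
      · have h := congrFun h2 k
        rw [hpdtH p, hpdtRH p] at h
        simp only [Pi.add_apply, Pi.smul_apply, Pi.neg_apply, smul_eq_mul] at h
        show rot (fun y => E (p.1, y)) p.2 k
          = -(μ * (pdt (fun q => H q k) p + β * pdt (rotT H k) p))
        linear_combination h
    · rintro ⟨h1, h2, h3, h4⟩
      refine ⟨?_, ?_, h3, h4⟩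
      · funext k
        rw [hpdtE p, hpdtRE p]
        simp only [Pi.add_apply, Pi.smul_apply, smul_eq_mul]
        exact h1 k
      · funext k
        rw [hpdtH p, hpdtRH p]
        simp only [Pi.add_apply, Pi.smul_apply, Pi.neg_apply, smul_eq_mul]
        exact h2 k
  constructor
  · intro hq
    have h8 := fun q => (mopiff q).1 (hq q)
    have hM1 : ∀ (q : ℝ × V3) (k : Fin 3),
        rotT H k q = ε * (pdt (fun q' => E q' k) q + β * pdt (rotT E k) q) + j q k := by
      intro q k
      fin_cases k
      · show rotT H 0 q = ε * (pdt (fun q' => E q' 0) q + β * pdt (rotT E 0) q) + j q 0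
        have hC := (h8 q).2.1.1
        rw [hcs] at hC
        apply mul_left_cancel₀ hs0.ne'
        linear_combination -hC
      · show rotT H 1 q = ε * (pdt (fun q' => E q' 1) q + β * pdt (rotT E 1) q) + j q 1
        have hC := (h8 q).2.2.1.1
        rw [hcs] at hC
        apply mul_left_cancel₀ hs0.ne'
        linear_combination -hC
      · show rotT H 2 q = ε * (pdt (fun q' => E q' 2) q + β * pdt (rotT E 2) q) + j q 2
        have hC := (h8 q).2.2.2.1
        rw [hcs] at hC
        apply mul_left_cancel₀ hs0.ne'
        linear_combination -hC
    have hM2 : ∀ (q : ℝ × V3) (k : Fin 3),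
        rotT E k q = -(μ * (pdt (fun q' => H q' k) q + β * pdt (rotT H k) q)) := by
      intro q k
      rw [← hμcs]
      fin_cases k
      · show rotT E 0 q = -(c * s * (pdt (fun q' => H q' 0) q + β * pdt (rotT H 0) q))
        have hD := (h8 q).2.1.2
        linear_combination -hD
      · show rotT E 1 q = -(c * s * (pdt (fun q' => H q' 1) q + β * pdt (rotT H 1) q))
        have hD := (h8 q).2.2.1.2
        linear_combination -hD
      · show rotT E 2 q = -(c * s * (pdt (fun q' => H q' 2) q + β * pdt (rotT H 2) q))
        have hD := (h8 q).2.2.2.2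
        linear_combination -hD
    have hkey := key_div ε β hE hH hj hρ hcont hM1
    have hM4 : ∀ q : ℝ × V3, dvgT H q = 0 := by
      intro q
      have hA := (h8 q).1.1
      rw [hcs] at hA
      have hk := hkey q
      apply mul_left_cancel₀ hs0.ne'
      rw [mul_zero]
      linear_combination hA + (β * s) * hk
    have hpdtdH : ∀ q : ℝ × V3, pdt (dvgT H) q = 0 := by
      intro q
      rw [show dvgT H = fun _ : ℝ × V3 => (0 : ℝ) from funext hM4, pdt]
      simp
    have hM3 : ∀ q : ℝ × V3, dvgT E q = ρ q / ε := by
      intro q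
      have hB := (h8 q).1.2
      rw [hpdtdH q] at hB
      linarith
    exact fun p => (mxiff p).2 ⟨hM1 p, hM2 p, hM3 p, hM4 p⟩
  · intro hmx
    have hall := fun q => (mxiff q).1 (hmx q)
    have hM1 := fun q => (hall q).1
    have hM2 := fun q => (hall q).2.1
    have hM3 := fun q => (hall q).2.2.1
    have hM4 := fun q => (hall q).2.2.2
    intro p
    apply (mopiff p).2
    have hpdtdH : pdt (dvgT H) p = 0 := by
      rw [show dvgT H = fun _ : ℝ × V3 => (0 : ℝ) from funext hM4, pdt]
      simp
    have hpdtdE : pdt (dvgT E) p = ε⁻¹ * pdt ρ p := by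
      rw [show dvgT E = fun q => ε⁻¹ * ρ q from funext fun q => by rw [hM3 q]; ring]
      rw [pdt, fderiv_const_mul ((hρ.differentiable (by norm_num)) p)]
      rfl
    refine ⟨⟨?_, ?_⟩, ⟨?_, ?_⟩, ⟨?_, ?_⟩, ⟨?_, ?_⟩⟩
    · rw [hpdtdE, hM4 p, hcs]
      field_simp
      ring
    · rw [hpdtdH, hM3 p]
      ring
    · rw [hM1 p 0, hcs]; ring
    · rw [hM2 p 0, ← hμcs]; ring
    · rw [hM1 p 1, hcs]; ring
    · rw [hM2 p 1, ← hμcs]; ring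
    · rw [hM1 p 2, hcs]; ring
    · rw [hM2 p 2, ← hμcs]; ring
end
end

section
/- Let ε, μ : Ω → ℝ be positive C¹ functions on an open set Ω ⊆ ℝ³ and E, H, j : ℝ × Ω → ℝ³, ρ : ℝ × Ω → ℝ. Set c = 1/√(εμ), ℰ = √ε E, ℋ = √μ H, V = ℰ + iℋ, c⃗ = grad(√c)/√c, W⃗ = grad(√W)/√W with W = √μ/√ε. Then E and H solve the inhomogeneous Maxwell system rot H = ε∂ₜE + j, rot E = -μ∂ₜH, div(εE) = ρ, div(μH) = 0 if and only if V solves the single biquaternionic equation ((1/c)∂ₜ + iD)V - V(i c⃗) - V*(i W⃗) = -(√μ j + iρ/√ε), where V* denotes componentwise complex conjugation of V and the products V(ic⃗), V*(iW⃗) are quaternionic products from the right. -/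
noncomputable section

/-- speed of light c = 1/√(εμ) in an inhomogeneous medium -/
noncomputable def cfun (ε μ : V3 → ℝ) (x : V3) : ℝ := 1 / Real.sqrt (ε x * μ x)

/-- intrinsic wave impedance W = √μ/√ε -/
noncomputable def Wfun (ε μ : V3 → ℝ) (x : V3) : ℝ := Real.sqrt (μ x) / Real.sqrt (ε x)

/-- c⃗ = grad(√c)/√c -/
noncomputable def cvec (ε μ : V3 → ℝ) (x : V3) : Fin 3 → ℝ :=
  fun k => pd k (fun y => Real.sqrt (cfun ε μ y)) x / Real.sqrt (cfun ε μ x)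

/-- W⃗ = grad(√W)/√W -/
noncomputable def Wvec (ε μ : V3 → ℝ) (x : V3) : Fin 3 → ℝ :=
  fun k => pd k (fun y => Real.sqrt (Wfun ε μ y)) x / Real.sqrt (Wfun ε μ x)

/-- V = √ε E + i√μ H as a purely vectorial biquaternion -/
noncomputable def Vq (ε μ : V3 → ℝ) (E H : ℝ × V3 → Fin 3 → ℝ) (p : ℝ × V3) : HC :=
  vecq fun k => ((Real.sqrt (ε p.2) * E p k : ℝ) : ℂ)
    + Complex.I * ((Real.sqrt (μ p.2) * H p k : ℝ) : ℂ)

/-- V* (componentwise complex conjugate of V) -/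
noncomputable def Vqst (ε μ : V3 → ℝ) (E H : ℝ × V3 → Fin 3 → ℝ) (p : ℝ × V3) : HC :=
  vecq fun k => ((Real.sqrt (ε p.2) * E p k : ℝ) : ℂ)
    - Complex.I * ((Real.sqrt (μ p.2) * H p k : ℝ) : ℂ)
/-! ### Auxiliary lemmas -/

section AuxDeriv
variable {X : Type*} [NormedAddCommGroup X] [NormedSpace ℝ X] {x : X} {v : X}

lemma fdA_mul {f g : X → ℝ} (hf : DifferentiableAt ℝ f x) (hg : DifferentiableAt ℝ g x) :
    fderiv ℝ (fun y => f y * g y) x v = fderiv ℝ f x v * g x + f x * fderiv ℝ g x v := by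
  rw [fderiv_fun_mul hf hg]; simp [mul_comm]; ring

lemma fdA_sqrt {f : X → ℝ} (hf : DifferentiableAt ℝ f x) (h0 : f x ≠ 0) :
    fderiv ℝ (fun y => Real.sqrt (f y)) x v = fderiv ℝ f x v / (2 * Real.sqrt (f x)) := by
  have h : HasFDerivAt (fun y => Real.sqrt (f y)) ((1 / (2 * Real.sqrt (f x))) • fderiv ℝ f x) x :=
    (Real.hasDerivAt_sqrt h0).comp_hasFDerivAt x hf.hasFDerivAt
  rw [h.fderiv]; simp; ring

lemma fdA_inv {f : X → ℝ} (hf : DifferentiableAt ℝ f x) (h0 : f x ≠ 0) :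
    fderiv ℝ (fun y => (f y)⁻¹) x v = -(fderiv ℝ f x v) / f x ^ 2 := by
  have h : HasFDerivAt (fun y => (f y)⁻¹) ((-(f x ^ 2)⁻¹) • fderiv ℝ f x) x :=
    (hasDerivAt_inv h0).comp_hasFDerivAt x hf.hasFDerivAt
  rw [h.fderiv]; simp; ring

lemma fdA_ofReal {f : X → ℝ} (hf : DifferentiableAt ℝ f x) :
    fderiv ℝ (fun y => ((f y : ℝ) : ℂ)) x v = ((fderiv ℝ f x v : ℝ) : ℂ) := by
  have h : HasFDerivAt (fun y => ((f y : ℝ) : ℂ)) (Complex.ofRealCLM.comp (fderiv ℝ f x)) x :=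
    Complex.ofRealCLM.hasFDerivAt.comp x hf.hasFDerivAt
  rw [h.fderiv]; rfl

lemma fdA_addC {f g : X → ℂ} (hf : DifferentiableAt ℝ f x) (hg : DifferentiableAt ℝ g x) :
    fderiv ℝ (fun y => f y + g y) x v = fderiv ℝ f x v + fderiv ℝ g x v := by
  rw [fderiv_fun_add hf hg]; rfl

lemma fdA_ImulC {f : X → ℂ} (hf : DifferentiableAt ℝ f x) :
    fderiv ℝ (fun y => Complex.I * f y) x v = Complex.I * fderiv ℝ f x v := by
  rw [fderiv_const_mul hf]; rfl

lemma fdA_div {f g : X → ℝ} (hf : DifferentiableAt ℝ f x) (hg : DifferentiableAt ℝ g x)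
    (h0 : g x ≠ 0) :
    fderiv ℝ (fun y => f y / g y) x v
      = (fderiv ℝ f x v * g x - f x * fderiv ℝ g x v) / g x ^ 2 := by
  have h : (fun y => f y / g y) = fun y => f y * (g y)⁻¹ := by
    funext y; rw [div_eq_mul_inv]
  rw [h, fdA_mul (g := fun y => (g y)⁻¹) hf (hg.inv h0), fdA_inv hg h0]
  field_simp; ring

lemma fdA_sqrt_ratio {f : X → ℝ} (hf : DifferentiableAt ℝ f x) (h0 : 0 < f x) :
    fderiv ℝ (fun y => Real.sqrt (f y)) x v / Real.sqrt (f x)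
      = fderiv ℝ f x v / (2 * f x) := by
  rw [fdA_sqrt hf h0.ne', div_div]
  congr 1
  rw [mul_right_comm, mul_assoc, Real.mul_self_sqrt h0.le]

lemma fdA_VqComp {f g : X → ℝ} (hf : DifferentiableAt ℝ f x) (hg : DifferentiableAt ℝ g x) :
    fderiv ℝ (fun y => ((f y : ℝ) : ℂ) + Complex.I * ((g y : ℝ) : ℂ)) x v
      = ((fderiv ℝ f x v : ℝ) : ℂ) + Complex.I * ((fderiv ℝ g x v : ℝ) : ℂ) := by
  have hf' : DifferentiableAt ℝ (fun y => ((f y : ℝ) : ℂ)) x :=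
    Complex.ofRealCLM.differentiableAt.comp x hf
  have hg' : DifferentiableAt ℝ (fun y => ((g y : ℝ) : ℂ)) x :=
    Complex.ofRealCLM.differentiableAt.comp x hg
  rw [fdA_addC hf' (hg'.const_mul _), fdA_ofReal hf, fdA_ImulC hg', fdA_ofReal hg]

end AuxDeriv

lemma fin3_fun_eq {α : Type*} (f g : Fin 3 → α) : f = g ↔ f 0 = g 0 ∧ f 1 = g 1 ∧ f 2 = g 2 := by
  constructor
  · rintro rfl; exact ⟨rfl, rfl, rfl⟩
  · rintro ⟨h0, h1, h2⟩; funext i; fin_cases i <;> assumption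

lemma cz (u v : ℝ) : ((u : ℂ) + Complex.I * (v : ℂ) = 0) ↔ (u = 0 ∧ v = 0) := by
  constructor
  · intro h
    have hre := congrArg Complex.re h
    have him := congrArg Complex.im h
    simp at hre him
    exact ⟨hre, him⟩
  · rintro ⟨rfl, rfl⟩; simp
lemma hcmul (a1 a2 a3 a4 b1 b2 b3 b4 : ℂ) :
    @HMul.hMul HC HC HC _ ⟨a1, a2, a3, a4⟩ ⟨b1, b2, b3, b4⟩
      = (⟨a1 * b1 - a2 * b2 - a3 * b3 - a4 * b4, a1 * b2 + a2 * b1 + a3 * b4 - a4 * b3,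
          a1 * b3 - a2 * b4 + a3 * b1 + a4 * b2, a1 * b4 + a2 * b3 - a3 * b2 + a4 * b1⟩ : HC) := by
  apply Quaternion.ext
  · exact Quaternion.re_mul _ _
  · exact Quaternion.imI_mul _ _
  · exact Quaternion.imJ_mul _ _
  · exact Quaternion.imK_mul _ _
lemma hcsmul (w a1 a2 a3 a4 : ℂ) :
    @HSMul.hSMul ℂ HC HC _ w ⟨a1, a2, a3, a4⟩ = (⟨w * a1, w * a2, w * a3, w * a4⟩ : HC) := rfl
lemma hcadd (a1 a2 a3 a4 b1 b2 b3 b4 : ℂ) :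
    @HAdd.hAdd HC HC HC _ ⟨a1, a2, a3, a4⟩ ⟨b1, b2, b3, b4⟩
      = (⟨a1 + b1, a2 + b2, a3 + b3, a4 + b4⟩ : HC) := rfl
lemma hcsub (a1 a2 a3 a4 b1 b2 b3 b4 : ℂ) :
    @HSub.hSub HC HC HC _ ⟨a1, a2, a3, a4⟩ ⟨b1, b2, b3, b4⟩
      = (⟨a1 - b1, a2 - b2, a3 - b3, a4 - b4⟩ : HC) := rfl
lemma hcneg (a1 a2 a3 a4 : ℂ) :
    @Neg.neg HC _ ⟨a1, a2, a3, a4⟩ = (⟨-a1, -a2, -a3, -a4⟩ : HC) := rfl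
set_option maxHeartbeats 4000000 in
lemma bigAlg (ε μ : V3 → ℝ) (E H j : ℝ × V3 → Fin 3 → ℝ) (ρ : ℝ × V3 → ℝ) (t : ℝ) (x : V3)
    (a b : ℝ) (ha : 0 < a) (hb : 0 < b)
    (de dm dtE dtH : Fin 3 → ℝ) (dE dH : Fin 3 → Fin 3 → ℝ)
    (hcinv : (cfun ε μ x)⁻¹ = a * b)
    (hcvec : ∀ k : Fin 3, cvec ε μ x k = -(de k / a ^ 2 + dm k / b ^ 2) / 4)
    (hwvec : ∀ k : Fin 3, Wvec ε μ x k = (dm k / b ^ 2 - de k / a ^ 2) / 4)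
    (haeq : Real.sqrt (ε x) = a) (hbeq : Real.sqrt (μ x) = b)
    (hCE : ∀ m : Fin 3,
      pdt (fun q : ℝ × V3 => ((Real.sqrt (ε q.2) * E q m : ℝ) : ℂ)
        + Complex.I * ((Real.sqrt (μ q.2) * H q m : ℝ) : ℂ)) (t, x)
      = ((a * dtE m : ℝ) : ℂ) + Complex.I * ((b * dtH m : ℝ) : ℂ))
    (hDE : ∀ k m : Fin 3,
      pd k (fun y => ((Real.sqrt (ε y) * E (t, y) m : ℝ) : ℂ)
        + Complex.I * ((Real.sqrt (μ y) * H (t, y) m : ℝ) : ℂ)) x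
      = ((de k / (2 * a) * E (t, x) m + a * dE k m : ℝ) : ℂ)
        + Complex.I * ((dm k / (2 * b) * H (t, x) m + b * dH k m : ℝ) : ℂ)) :
    ((((cfun ε μ x)⁻¹ : ℝ) : ℂ) • qpdt (Vq ε μ E H) (t, x)
        + Complex.I • DqT (Vq ε μ E H) (t, x)
        - Vq ε μ E H (t, x) * (Complex.I • vecq fun k => ((cvec ε μ x k : ℝ) : ℂ))
        - Vqst ε μ E H (t, x) * (Complex.I • vecq fun k => ((Wvec ε μ x k : ℝ) : ℂ)))
      - (-(vecq (fun k => ((b * j (t, x) k : ℝ) : ℂ))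
          + scq (Complex.I * ((ρ (t, x) : ℝ) : ℂ) / ((a : ℝ) : ℂ))))
      = ⟨(((dm 0 * H (t, x) 0 + b ^ 2 * dH 0 0 + (dm 1 * H (t, x) 1 + b ^ 2 * dH 1 1)
              + (dm 2 * H (t, x) 2 + b ^ 2 * dH 2 2)) / b : ℝ) : ℂ)
            + Complex.I * ((-((de 0 * E (t, x) 0 + a ^ 2 * dE 0 0
              + (de 1 * E (t, x) 1 + a ^ 2 * dE 1 1)
              + (de 2 * E (t, x) 2 + a ^ 2 * dE 2 2) - ρ (t, x)) / a) : ℝ) : ℂ),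
          ((-(b * ((dH 1 2 - dH 2 1) - (a ^ 2 * dtE 0 + j (t, x) 0))) : ℝ) : ℂ)
            + Complex.I * ((a * ((dE 1 2 - dE 2 1) - (-(b ^ 2 * dtH 0))) : ℝ) : ℂ),
          ((-(b * ((dH 2 0 - dH 0 2) - (a ^ 2 * dtE 1 + j (t, x) 1))) : ℝ) : ℂ)
            + Complex.I * ((a * ((dE 2 0 - dE 0 2) - (-(b ^ 2 * dtH 1))) : ℝ) : ℂ),
          ((-(b * ((dH 0 1 - dH 1 0) - (a ^ 2 * dtE 2 + j (t, x) 2))) : ℝ) : ℂ)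
            + Complex.I * ((a * ((dE 0 1 - dE 1 0) - (-(b ^ 2 * dtH 2))) : ℝ) : ℂ)⟩ := by
  have hpd0 : ∀ k : Fin 3, pd k (fun _ : V3 => (0 : ℂ)) x = 0 := by
    intro k
    show fderiv ℝ (fun _ : V3 => (0:ℂ)) x (Pi.single k 1) = 0
    simp
  have hpdt0 : pdt (fun _ : ℝ × V3 => (0 : ℂ)) (t, x) = 0 := by
    show fderiv ℝ (fun _ : ℝ × V3 => (0:ℂ)) (t, x) (1, 0) = 0
    simp
  have ha0 : (a : ℂ) ≠ 0 := Complex.ofReal_ne_zero.mpr ha.ne'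
  have hb0 : (b : ℂ) ≠ 0 := Complex.ofReal_ne_zero.mpr hb.ne'
  rw [hcinv, show Complex.I * ((ρ (t, x) : ℝ) : ℂ) / ((a : ℝ) : ℂ)
      = Complex.I * ((ρ (t, x) / a : ℝ) : ℂ) from by rw [Complex.ofReal_div]; ring]
  simp only [hcvec, hwvec]
  simp only [qpdt, DqT, Dq, qpd, Vq, Vqst, vecq, scq, haeq, hbeq]
  simp only [hCE, hDE, hpd0, hpdt0]
  apply Quaternion.ext <;>
  · simp only [Quaternion.re_mul, Quaternion.imI_mul, Quaternion.imJ_mul, Quaternion.imK_mul,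
      Quaternion.re_smul, Quaternion.imI_smul, Quaternion.imJ_smul,
      Quaternion.imK_smul, Quaternion.re_add, Quaternion.imI_add,
      Quaternion.imJ_add, Quaternion.imK_add, Quaternion.re_sub,
      Quaternion.imI_sub, Quaternion.imJ_sub, Quaternion.imK_sub,
      Quaternion.re_neg, Quaternion.imI_neg, Quaternion.imJ_neg,
      Quaternion.imK_neg, QuaternionAlgebra.mk_add_mk, QuaternionAlgebra.mk_sub_mk,
      QuaternionAlgebra.neg_mk, hcmul, hcsmul, hcadd, hcsub, hcneg, e1, e2, e3, smul_eq_mul]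
    rw [Complex.ext_iff]
    constructor <;>
    · simp only [Complex.add_re, Complex.add_im, Complex.sub_re, Complex.sub_im,
        Complex.neg_re, Complex.neg_im, Complex.mul_re, Complex.mul_im, Complex.I_re,
        Complex.I_im, Complex.ofReal_re, Complex.ofReal_im, Complex.zero_re, Complex.zero_im,
        mul_zero, zero_mul, sub_zero, zero_sub, add_zero, zero_add, mul_one, one_mul, neg_neg,
        neg_zero]
      field_simp
      ring
lemma hceq0 (a1 a2 a3 a4 : ℂ) :
    @Eq HC ⟨a1, a2, a3, a4⟩ 0 ↔ a1 = 0 ∧ a2 = 0 ∧ a3 = 0 ∧ a4 = 0 := by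
  constructor
  · intro h
    exact ⟨congrArg (fun q : HC => q.re) h, congrArg (fun q : HC => q.imI) h,
      congrArg (fun q : HC => q.imJ) h, congrArg (fun q : HC => q.imK) h⟩
  · rintro ⟨rfl, rfl, rfl, rfl⟩; rfl
set_option maxHeartbeats 4000000 in
lemma keyPoint (ε μ : V3 → ℝ) (E H j : ℝ × V3 → Fin 3 → ℝ) (ρ : ℝ × V3 → ℝ)
    (t : ℝ) (x : V3)
    (hεd : DifferentiableAt ℝ ε x) (hμd : DifferentiableAt ℝ μ x)
    (hε : 0 < ε x) (hμ : 0 < μ x)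
    (hEd : ∀ m : Fin 3, DifferentiableAt ℝ (fun q => E q m) (t, x))
    (hHd : ∀ m : Fin 3, DifferentiableAt ℝ (fun q => H q m) (t, x)) :
    ((rot (fun y => H (t, y)) x = ε x • pdt E (t, x) + j (t, x)) ∧
      (rot (fun y => E (t, y)) x = -(μ x • pdt H (t, x))) ∧
      dvg (fun y k => ε y * E (t, y) k) x = ρ (t, x) ∧
      dvg (fun y k => μ y * H (t, y) k) x = 0)
    ↔
    ((((cfun ε μ x)⁻¹ : ℝ) : ℂ) • qpdt (Vq ε μ E H) (t, x)
        + Complex.I • DqT (Vq ε μ E H) (t, x)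
        - Vq ε μ E H (t, x) * (Complex.I • vecq fun k => ((cvec ε μ x k : ℝ) : ℂ))
        - Vqst ε μ E H (t, x) * (Complex.I • vecq fun k => ((Wvec ε μ x k : ℝ) : ℂ))
      = -(vecq (fun k => ((Real.sqrt (μ x) * j (t, x) k : ℝ) : ℂ))
          + scq (Complex.I * ((ρ (t, x) : ℝ) : ℂ) / ((Real.sqrt (ε x) : ℝ) : ℂ)))) := by
  -- abbreviations for the square roots
  obtain ⟨a, haeq⟩ : ∃ a, Real.sqrt (ε x) = a := ⟨_, rfl⟩
  obtain ⟨b, hbeq⟩ : ∃ b, Real.sqrt (μ x) = b := ⟨_, rfl⟩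
  have ha : 0 < a := haeq ▸ Real.sqrt_pos.mpr hε
  have hb : 0 < b := hbeq ▸ Real.sqrt_pos.mpr hμ
  have hA2 : a ^ 2 = ε x := by rw [← haeq]; exact Real.sq_sqrt hε.le
  have hB2 : b ^ 2 = μ x := by rw [← hbeq]; exact Real.sq_sqrt hμ.le
  rw [haeq, hbeq, show ε x = a ^ 2 from hA2.symm, show μ x = b ^ 2 from hB2.symm]
  -- named derivatives
  obtain ⟨de, hde⟩ : ∃ d : Fin 3 → ℝ, ∀ k, fderiv ℝ ε x (Pi.single k (1:ℝ)) = d k :=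
    ⟨_, fun _ => rfl⟩
  obtain ⟨dm, hdm⟩ : ∃ d : Fin 3 → ℝ, ∀ k, fderiv ℝ μ x (Pi.single k (1:ℝ)) = d k :=
    ⟨_, fun _ => rfl⟩
  obtain ⟨dE, hdE⟩ : ∃ d : Fin 3 → Fin 3 → ℝ,
      ∀ k m, fderiv ℝ (fun y => E (t, y) m) x (Pi.single k (1:ℝ)) = d k m :=
    ⟨_, fun _ _ => rfl⟩
  obtain ⟨dH, hdH⟩ : ∃ d : Fin 3 → Fin 3 → ℝ,
      ∀ k m, fderiv ℝ (fun y => H (t, y) m) x (Pi.single k (1:ℝ)) = d k m :=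
    ⟨_, fun _ _ => rfl⟩
  obtain ⟨dtE, hdtE⟩ : ∃ d : Fin 3 → ℝ,
      ∀ m, fderiv ℝ (fun q => E q m) (t, x) ((1:ℝ), (0:V3)) = d m := ⟨_, fun _ => rfl⟩
  obtain ⟨dtH, hdtH⟩ : ∃ d : Fin 3 → ℝ,
      ∀ m, fderiv ℝ (fun q => H q m) (t, x) ((1:ℝ), (0:V3)) = d m := ⟨_, fun _ => rfl⟩
  -- differentiability facts
  have hEslice : ∀ m : Fin 3, DifferentiableAt ℝ (fun y => E (t, y) m) x := fun m =>
    (hEd m).comp x ((differentiableAt_const t).prodMk differentiableAt_id)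
  have hHslice : ∀ m : Fin 3, DifferentiableAt ℝ (fun y => H (t, y) m) x := fun m =>
    (hHd m).comp x ((differentiableAt_const t).prodMk differentiableAt_id)
  have hsεd : DifferentiableAt ℝ (fun y => Real.sqrt (ε y)) x := hεd.sqrt hε.ne'
  have hsμd : DifferentiableAt ℝ (fun y => Real.sqrt (μ y)) x := hμd.sqrt hμ.ne'
  have hsεq : DifferentiableAt ℝ (fun q : ℝ × V3 => Real.sqrt (ε q.2)) (t, x) :=
    hsεd.comp (g := fun y => Real.sqrt (ε y)) (t, x) differentiableAt_snd
  have hsμq : DifferentiableAt ℝ (fun q : ℝ × V3 => Real.sqrt (μ q.2)) (t, x) :=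
    hsμd.comp (g := fun y => Real.sqrt (μ y)) (t, x) differentiableAt_snd
  -- slice partial derivatives as pd
  have hpdE : ∀ k m : Fin 3, pd k (fun y => E (t, y) m) x = dE k m := fun k m => hdE k m
  have hpdH : ∀ k m : Fin 3, pd k (fun y => H (t, y) m) x = dH k m := fun k m => hdH k m
  -- time derivative of the (vector-valued) fields
  have hpdtEm : ∀ m : Fin 3, pdt E (t, x) m = dtE m := by
    intro m
    have h : fderiv ℝ E (t, x)
        = ContinuousLinearMap.pi (fun i => fderiv ℝ (fun q => E q i) (t, x)) :=
      fderiv_pi (fun i => hEd i)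
    show fderiv ℝ E (t, x) (1, 0) m = dtE m
    rw [h]; exact hdtE m
  have hpdtHm : ∀ m : Fin 3, pdt H (t, x) m = dtH m := by
    intro m
    have h : fderiv ℝ H (t, x)
        = ContinuousLinearMap.pi (fun i => fderiv ℝ (fun q => H q i) (t, x)) :=
      fderiv_pi (fun i => hHd i)
    show fderiv ℝ H (t, x) (1, 0) m = dtH m
    rw [h]; exact hdtH m
  -- time derivative of the quaternion components
  have hzε : fderiv ℝ (fun q : ℝ × V3 => Real.sqrt (ε q.2)) (t, x) ((1:ℝ), (0:V3)) = 0 := by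
    have h : HasFDerivAt (fun q : ℝ × V3 => Real.sqrt (ε q.2))
        ((fderiv ℝ (fun y => Real.sqrt (ε y)) x).comp (ContinuousLinearMap.snd ℝ ℝ V3)) (t, x) :=
      HasFDerivAt.comp (g := fun y => Real.sqrt (ε y)) (t, x) hsεd.hasFDerivAt hasFDerivAt_snd
    rw [h.fderiv]; simp
  have hzμ : fderiv ℝ (fun q : ℝ × V3 => Real.sqrt (μ q.2)) (t, x) ((1:ℝ), (0:V3)) = 0 := by
    have h : HasFDerivAt (fun q : ℝ × V3 => Real.sqrt (μ q.2))
        ((fderiv ℝ (fun y => Real.sqrt (μ y)) x).comp (ContinuousLinearMap.snd ℝ ℝ V3)) (t, x) :=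
      HasFDerivAt.comp (g := fun y => Real.sqrt (μ y)) (t, x) hsμd.hasFDerivAt hasFDerivAt_snd
    rw [h.fderiv]; simp
  have hCE : ∀ m : Fin 3,
      pdt (fun q : ℝ × V3 => ((Real.sqrt (ε q.2) * E q m : ℝ) : ℂ)
        + Complex.I * ((Real.sqrt (μ q.2) * H q m : ℝ) : ℂ)) (t, x)
      = ((a * dtE m : ℝ) : ℂ) + Complex.I * ((b * dtH m : ℝ) : ℂ) := by
    intro m
    have h1 : fderiv ℝ (fun q : ℝ × V3 => Real.sqrt (ε q.2) * E q m) (t, x) ((1:ℝ), (0:V3))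
        = a * dtE m := by
      rw [fdA_mul hsεq (hEd m), hzε, hdtE m, haeq]; ring
    have h2 : fderiv ℝ (fun q : ℝ × V3 => Real.sqrt (μ q.2) * H q m) (t, x) ((1:ℝ), (0:V3))
        = b * dtH m := by
      rw [fdA_mul hsμq (hHd m), hzμ, hdtH m, hbeq]; ring
    show fderiv ℝ _ (t, x) ((1:ℝ), (0:V3)) = _
    rw [fdA_VqComp (f := fun q => Real.sqrt (ε q.2) * E q m) (g := fun q => Real.sqrt (μ q.2) * H q m)
      (hsεq.mul (hEd m)) (hsμq.mul (hHd m)), h1, h2]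
  -- spatial partial derivatives of the quaternion components
  have hDE : ∀ k m : Fin 3,
      pd k (fun y => ((Real.sqrt (ε y) * E (t, y) m : ℝ) : ℂ)
        + Complex.I * ((Real.sqrt (μ y) * H (t, y) m : ℝ) : ℂ)) x
      = ((de k / (2 * a) * E (t, x) m + a * dE k m : ℝ) : ℂ)
        + Complex.I * ((dm k / (2 * b) * H (t, x) m + b * dH k m : ℝ) : ℂ) := by
    intro k m
    have h1 : fderiv ℝ (fun y => Real.sqrt (ε y) * E (t, y) m) x (Pi.single k (1:ℝ))
        = de k / (2 * a) * E (t, x) m + a * dE k m := by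
      rw [fdA_mul hsεd (hEslice m), fdA_sqrt hεd hε.ne', hde k, hdE k m, haeq]
    have h2 : fderiv ℝ (fun y => Real.sqrt (μ y) * H (t, y) m) x (Pi.single k (1:ℝ))
        = dm k / (2 * b) * H (t, x) m + b * dH k m := by
      rw [fdA_mul hsμd (hHslice m), fdA_sqrt hμd hμ.ne', hdm k, hdH k m, hbeq]
    show fderiv ℝ _ x (Pi.single k 1) = _
    rw [fdA_VqComp (f := fun y => Real.sqrt (ε y) * E (t, y) m) (g := fun y => Real.sqrt (μ y) * H (t, y) m)
      (hsεd.mul (hEslice m)) (hsμd.mul (hHslice m)), h1, h2]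
  -- divergence of ε E and μ H
  have hprodE : ∀ k m : Fin 3, pd k (fun y => ε y * E (t, y) m) x
      = de k * E (t, x) m + a ^ 2 * dE k m := by
    intro k m
    show fderiv ℝ (fun y => ε y * E (t, y) m) x (Pi.single k 1) = _
    rw [fdA_mul hεd (hEslice m), hde k, hdE k m, hA2]
  have hprodH : ∀ k m : Fin 3, pd k (fun y => μ y * H (t, y) m) x
      = dm k * H (t, x) m + b ^ 2 * dH k m := by
    intro k m
    show fderiv ℝ (fun y => μ y * H (t, y) m) x (Pi.single k 1) = _
    rw [fdA_mul hμd (hHslice m), hdm k, hdH k m, hB2]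
  have hdvgE : dvg (fun y k => ε y * E (t, y) k) x
      = de 0 * E (t, x) 0 + a ^ 2 * dE 0 0 + (de 1 * E (t, x) 1 + a ^ 2 * dE 1 1)
        + (de 2 * E (t, x) 2 + a ^ 2 * dE 2 2) := by
    simp only [dvg]; rw [hprodE 0 0, hprodE 1 1, hprodE 2 2]
  have hdvgH : dvg (fun y k => μ y * H (t, y) k) x
      = dm 0 * H (t, x) 0 + b ^ 2 * dH 0 0 + (dm 1 * H (t, x) 1 + b ^ 2 * dH 1 1)
        + (dm 2 * H (t, x) 2 + b ^ 2 * dH 2 2) := by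
    simp only [dvg]; rw [hprodH 0 0, hprodH 1 1, hprodH 2 2]
  -- rotations
  have hrotH : rot (fun y => H (t, y)) x
      = ![dH 1 2 - dH 2 1, dH 2 0 - dH 0 2, dH 0 1 - dH 1 0] := by
    simp only [rot]
    rw [hpdH 1 2, hpdH 2 1, hpdH 2 0, hpdH 0 2, hpdH 0 1, hpdH 1 0]
  have hrotE : rot (fun y => E (t, y)) x
      = ![dE 1 2 - dE 2 1, dE 2 0 - dE 0 2, dE 0 1 - dE 1 0] := by
    simp only [rot]
    rw [hpdE 1 2, hpdE 2 1, hpdE 2 0, hpdE 0 2, hpdE 0 1, hpdE 1 0]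
  -- the coefficient functions
  have hPpos : 0 < ε x * μ x := mul_pos hε hμ
  have hab : Real.sqrt (ε x * μ x) = a * b := by rw [Real.sqrt_mul hε.le, haeq, hbeq]
  have hcinv : (cfun ε μ x)⁻¹ = a * b := by
    rw [cfun, one_div, inv_inv, hab]
  have hcvec : ∀ k : Fin 3, cvec ε μ x k = -(de k / a ^ 2 + dm k / b ^ 2) / 4 := by
    intro k
    have hQd : DifferentiableAt ℝ (fun y => Real.sqrt (ε y * μ y)) x :=
      (hεd.mul hμd).sqrt hPpos.ne'
    have hQpos : 0 < Real.sqrt (ε x * μ x) := Real.sqrt_pos.mpr hPpos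
    have hcd : DifferentiableAt ℝ (fun y => cfun ε μ y) x := by
      simp only [cfun, one_div]; exact hQd.inv hQpos.ne'
    have hcpos : 0 < cfun ε μ x := by rw [cfun]; exact div_pos one_pos hQpos
    have step1 : cvec ε μ x k
        = fderiv ℝ (fun y => cfun ε μ y) x (Pi.single k 1) / (2 * cfun ε μ x) := by
      show fderiv ℝ (fun y => Real.sqrt (cfun ε μ y)) x (Pi.single k 1)
          / Real.sqrt (cfun ε μ x) = _
      exact fdA_sqrt_ratio hcd hcpos
    have step2 : fderiv ℝ (fun y => cfun ε μ y) x (Pi.single k (1:ℝ))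
        = -((de k * μ x + ε x * dm k) / (2 * Real.sqrt (ε x * μ x)))
            / (Real.sqrt (ε x * μ x)) ^ 2 := by
      simp only [cfun, one_div]
      rw [fdA_inv hQd hQpos.ne', fdA_sqrt (f := fun y => ε y * μ y) (hεd.mul hμd) hPpos.ne', fdA_mul hεd hμd, hde k, hdm k]
    rw [step1, step2, show cfun ε μ x = (Real.sqrt (ε x * μ x))⁻¹ from by rw [cfun, one_div],
      hab, ← hA2, ← hB2]
    field_simp
    ring
  have hwvec : ∀ k : Fin 3, Wvec ε μ x k = (dm k / b ^ 2 - de k / a ^ 2) / 4 := by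
    intro k
    have hsε0 : Real.sqrt (ε x) ≠ 0 := by rw [haeq]; exact ha.ne'
    have hWd : DifferentiableAt ℝ (fun y => Wfun ε μ y) x := by
      simp only [Wfun]
      exact hsμd.mul (hsεd.inv hsε0)
    have hWpos : 0 < Wfun ε μ x := by
      rw [Wfun]; exact div_pos (Real.sqrt_pos.mpr hμ) (Real.sqrt_pos.mpr hε)
    have step1 : Wvec ε μ x k
        = fderiv ℝ (fun y => Wfun ε μ y) x (Pi.single k 1) / (2 * Wfun ε μ x) := by
      show fderiv ℝ (fun y => Real.sqrt (Wfun ε μ y)) x (Pi.single k 1)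
          / Real.sqrt (Wfun ε μ x) = _
      exact fdA_sqrt_ratio hWd hWpos
    have step2 : fderiv ℝ (fun y => Wfun ε μ y) x (Pi.single k (1:ℝ))
        = (dm k / (2 * b) * a - b * (de k / (2 * a))) / a ^ 2 := by
      simp only [Wfun]
      rw [fdA_div hsμd hsεd hsε0, fdA_sqrt hμd hμ.ne', fdA_sqrt hεd hε.ne', hde k, hdm k,
        haeq, hbeq]
    rw [step1, step2, show Wfun ε μ x = b / a from by rw [Wfun, haeq, hbeq]]
    field_simp
    ring
  -- the central algebraic identity
  have hdiff := bigAlg ε μ E H j ρ t x a b ha hb de dm dtE dtH dE dH hcinv hcvec hwvec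
    haeq hbeq hCE hDE
  -- assembling the equivalence
  rw [hrotH, hrotE, hdvgE, hdvgH]
  conv_rhs => rw [← sub_eq_zero, hdiff]
  rw [hceq0]
  simp only [fin3_fun_eq]
  simp only [Matrix.cons_val_zero, Matrix.cons_val_one, Matrix.head_cons, Matrix.cons_val_two,
    Matrix.tail_cons, Pi.add_apply, Pi.smul_apply, Pi.neg_apply, smul_eq_mul,
    hpdtEm, hpdtHm]

  simp only [Quaternion.re_zero, Quaternion.imI_zero, Quaternion.imJ_zero,
    Quaternion.imK_zero, cz, div_eq_zero_iff, neg_eq_zero, mul_eq_zero, sub_eq_zero,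
    or_iff_left ha.ne', or_iff_left hb.ne', or_iff_right ha.ne', or_iff_right hb.ne']
  tauto

/-- the Maxwell system for an inhomogeneous medium is equivalent to the
single biquaternionic equation ((1/c)∂ₜ + iD)V - V(ic⃗) - V*(iW⃗) = -(√μ j + iρ/√ε). -/
theorem stmt10 (Ω : Set V3) (hΩ : IsOpen Ω) (ε μ : V3 → ℝ)
    (hεs : ContDiffOn ℝ 1 ε Ω) (hμs : ContDiffOn ℝ 1 μ Ω)
    (hε : ∀ x ∈ Ω, 0 < ε x) (hμ : ∀ x ∈ Ω, 0 < μ x)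
    (E H j : ℝ × V3 → Fin 3 → ℝ) (ρ : ℝ × V3 → ℝ)
    (hE : ∀ k, ContDiffOn ℝ 1 (fun p => E p k) (Set.univ ×ˢ Ω))
    (hH : ∀ k, ContDiffOn ℝ 1 (fun p => H p k) (Set.univ ×ˢ Ω)) :
    (∀ p : ℝ × V3, p.2 ∈ Ω →
      (rot (fun y => H (p.1, y)) p.2 = ε p.2 • pdt E p + j p) ∧
      (rot (fun y => E (p.1, y)) p.2 = -(μ p.2 • pdt H p)) ∧
      dvg (fun y k => ε y * E (p.1, y) k) p.2 = ρ p ∧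
      dvg (fun y k => μ y * H (p.1, y) k) p.2 = 0)
    ↔
    (∀ p : ℝ × V3, p.2 ∈ Ω →
      (((cfun ε μ p.2)⁻¹ : ℝ) : ℂ) • qpdt (Vq ε μ E H) p
        + Complex.I • DqT (Vq ε μ E H) p
        - Vq ε μ E H p * (Complex.I • vecq fun k => ((cvec ε μ p.2 k : ℝ) : ℂ))
        - Vqst ε μ E H p * (Complex.I • vecq fun k => ((Wvec ε μ p.2 k : ℝ) : ℂ))
      = -(vecq (fun k => ((Real.sqrt (μ p.2) * j p k : ℝ) : ℂ))
          + scq (Complex.I * ((ρ p : ℝ) : ℂ) / ((Real.sqrt (ε p.2) : ℝ) : ℂ)))) := by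

  refine forall_congr' fun p => ?_
  refine imp_congr_right fun hp => ?_
  obtain ⟨t, x⟩ := p
  have hx : x ∈ Ω := hp
  have hεd : DifferentiableAt ℝ ε x :=
    (hεs.differentiableOn one_ne_zero).differentiableAt (hΩ.mem_nhds hx)
  have hμd : DifferentiableAt ℝ μ x :=
    (hμs.differentiableOn one_ne_zero).differentiableAt (hΩ.mem_nhds hx)
  have hmem : ((t, x) : ℝ × V3) ∈ Set.univ ×ˢ Ω := ⟨Set.mem_univ _, hx⟩
  have hopen : IsOpen ((Set.univ : Set ℝ) ×ˢ Ω) := isOpen_univ.prod hΩ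
  have hEd : ∀ m : Fin 3, DifferentiableAt ℝ (fun q => E q m) (t, x) := fun m =>
    ((hE m).differentiableOn one_ne_zero).differentiableAt (hopen.mem_nhds hmem)
  have hHd : ∀ m : Fin 3, DifferentiableAt ℝ (fun q => H q m) (t, x) := fun m =>
    ((hH m).differentiableOn one_ne_zero).differentiableAt (hopen.mem_nhds hmem)
  exact keyPoint ε μ E H j ρ t x hεd hμd (hε x hx) (hμ x hx) hEd hHd
end
end

section
/- Let f : Ω → ℂ be nonvanishing and C². For any scalar C² function g : Ω → ℂ one has the identity (D - M^{Df/f})g = f·D(f⁻¹g); consequently the factorization of the Schrödinger operator can be written as (D + M^{Df/f})(f·D(f⁻¹g)) = (-Δ + Δf/f)g. In particular, if g solves -Δg + (Δf/f)g = 0 then the vector field F = f·D(f⁻¹g) solves (D + M^{Df/f})F = 0. -/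
noncomputable section

section Helpers

open Filter Topology

lemma pd_congr {a b : V3 → ℂ} {x : V3} (h : a =ᶠ[nhds x] b) (k : Fin 3) :
    pd k a x = pd k b x := by
  unfold pd; rw [h.fderiv_eq]

lemma pd_mul {a b : V3 → ℂ} {x : V3} (ha : DifferentiableAt ℝ a x)
    (hb : DifferentiableAt ℝ b x) (k : Fin 3) :
    pd k (fun y => a y * b y) x = pd k a x * b x + a x * pd k b x := by
  unfold pd
  rw [fderiv_fun_mul ha hb]
  simp [smul_eq_mul]; ring

lemma pd_add {a b : V3 → ℂ} {x : V3} (ha : DifferentiableAt ℝ a x)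
    (hb : DifferentiableAt ℝ b x) (k : Fin 3) :
    pd k (fun y => a y + b y) x = pd k a x + pd k b x := by
  unfold pd
  rw [fderiv_fun_add ha hb]; simp

lemma pd_contDiffAt {u : V3 → ℂ} {x : V3} (hu : ContDiffAt ℝ 2 u x) (k : Fin 3) :
    ContDiffAt ℝ 1 (pd k u) x := by
  have h := hu.fderiv_right (m := 1) (by norm_num)
  exact (ContinuousLinearMap.apply ℝ ℂ (Pi.single k (1:ℝ))).contDiff.contDiffAt.comp x h

lemma pd_comm {u : V3 → ℂ} {x : V3} (hu : ContDiffAt ℝ 2 u x) (i j : Fin 3) :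
    pd i (pd j u) x = pd j (pd i u) x := by
  have hsymm := hu.isSymmSndFDerivAt (by norm_num)
  have hd : DifferentiableAt ℝ (fderiv ℝ u) x :=
    (hu.fderiv_right (m := 1) (by norm_num)).differentiableAt one_ne_zero
  have key : ∀ a b : Fin 3, pd a (pd b u) x =
      fderiv ℝ (fderiv ℝ u) x (Pi.single a 1) (Pi.single b 1) := by
    intro a b
    unfold pd
    have h1 : (fun y => fderiv ℝ u y (Pi.single b (1:ℝ))) =
        (ContinuousLinearMap.apply ℝ ℂ (Pi.single b (1:ℝ))) ∘ (fderiv ℝ u) := rfl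
    rw [h1, fderiv_comp x
      ((ContinuousLinearMap.apply ℝ ℂ (Pi.single b (1:ℝ))).differentiableAt) hd]
    simp
  rw [key, key, hsymm]

end Helpers

/-- (D - M^{Df/f})g = f·D(f⁻¹g); the corresponding form of the
factorization of the Schrödinger operator; and if g solves the Schrödinger
equation then F = f·D(f⁻¹g) solves (D + M^{Df/f})F = 0. -/
theorem stmt12 (Ω : Set V3) (hΩ : IsOpen Ω) (f g : V3 → ℂ)
    (hf : ContDiffOn ℝ 2 f Ω) (hf0 : ∀ x ∈ Ω, f x ≠ 0)
    (hg : ContDiffOn ℝ 2 g Ω) :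
    (∀ x ∈ Ω,
      vecq (grad g x) - scq (g x) * vecq (fun k => grad f x k / f x)
        = scq (f x) * vecq (grad (fun y => g y / f y) x)) ∧
    (∀ x ∈ Ω,
      Dq (fun y => scq (f y) * vecq (grad (fun z => g z / f z) y)) x
        + (scq (f x) * vecq (grad (fun z => g z / f z) x))
            * vecq (fun k => grad f x k / f x)
      = scq (-lapS g x + (lapS f x / f x) * g x)) ∧
    ((∀ x ∈ Ω, -lapS g x + (lapS f x / f x) * g x = 0) →
      ∀ x ∈ Ω,
        Dq (fun y => scq (f y) * vecq (grad (fun z => g z / f z) y)) x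
          + (scq (f x) * vecq (grad (fun z => g z / f z) x))
              * vecq (fun k => grad f x k / f x) = 0) := by
  classical
  simp only [div_eq_mul_inv]
  set u : V3 → ℂ := fun y => g y * (f y)⁻¹ with hu_def
  have hu : ContDiffOn ℝ 2 u Ω := hg.mul (hf.inv hf0)
  have hmem : ∀ x ∈ Ω, Ω ∈ nhds x := fun x hx => hΩ.mem_nhds hx
  have hfc : ∀ x ∈ Ω, ContDiffAt ℝ 2 f x := fun x hx => hf.contDiffAt (hmem x hx)
  have huc : ∀ x ∈ Ω, ContDiffAt ℝ 2 u x := fun x hx => hu.contDiffAt (hmem x hx)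
  have hfd : ∀ x ∈ Ω, DifferentiableAt ℝ f x :=
    fun x hx => (hfc x hx).differentiableAt (by norm_num)
  have hud : ∀ x ∈ Ω, DifferentiableAt ℝ u x :=
    fun x hx => (huc x hx).differentiableAt (by norm_num)
  have hpfd : ∀ x ∈ Ω, ∀ k, DifferentiableAt ℝ (pd k f) x :=
    fun x hx k => (pd_contDiffAt (hfc x hx) k).differentiableAt one_ne_zero
  have hpud : ∀ x ∈ Ω, ∀ k, DifferentiableAt ℝ (pd k u) x :=
    fun x hx k => (pd_contDiffAt (huc x hx) k).differentiableAt one_ne_zero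
  have hgfu : ∀ x ∈ Ω, g =ᶠ[nhds x] fun y => f y * u y := by
    intro x hx
    filter_upwards [hmem x hx] with y hy
    have := hf0 y hy
    simp only [hu_def]; rw [mul_comm (g y), ← mul_assoc, mul_inv_cancel₀ this, one_mul]
  have L1 : ∀ x ∈ Ω, ∀ k, pd k g x = pd k f x * u x + f x * pd k u x := by
    intro x hx k
    rw [pd_congr (hgfu x hx) k, pd_mul (hfd x hx) (hud x hx) k]
  have L2 : ∀ x ∈ Ω, ∀ k, pd k (pd k g) x =
      pd k (pd k f) x * u x + 2 * pd k f x * pd k u x + f x * pd k (pd k u) x := by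
    intro x hx k
    have he : pd k g =ᶠ[nhds x] fun y => pd k f y * u y + f y * pd k u y := by
      filter_upwards [hmem x hx] with y hy
      exact L1 y hy k
    rw [pd_congr he k,
      pd_add (a := fun y => pd k f y * u y) (b := fun y => f y * pd k u y) ((hpfd x hx k).mul (hud x hx)) ((hfd x hx).mul (hpud x hx k)) k,
      pd_mul (hpfd x hx k) (hud x hx) k, pd_mul (hfd x hx) (hpud x hx k) k]
    ring
  -- the key component computation for part 2
  have hF : ∀ x ∈ Ω, ∀ k : Fin 3,
      qpd k (fun y => scq (f y) * vecq (grad u y)) x =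
      ⟨0, pd k f x * pd 0 u x + f x * pd k (pd 0 u) x,
          pd k f x * pd 1 u x + f x * pd k (pd 1 u) x,
          pd k f x * pd 2 u x + f x * pd k (pd 2 u) x⟩ := by
    intro x hx k
    have hre : (fun y => ((scq (f y) * vecq (grad u y)) : HC).re) = fun _ => (0:ℂ) := by
      funext y; simp [scq, vecq, grad, ↓Quaternion.re_mul]
    have him : ∀ j : Fin 3, ∀ y : V3,
        f y * grad u y j = f y * pd j u y := by intro j y; rfl
    have hI : (fun y => ((scq (f y) * vecq (grad u y)) : HC).imI)
        = fun y => f y * pd 0 u y := by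
      funext y; simp [scq, vecq, grad, ↓Quaternion.imI_mul]
    have hJ : (fun y => ((scq (f y) * vecq (grad u y)) : HC).imJ)
        = fun y => f y * pd 1 u y := by
      funext y; simp [scq, vecq, grad, ↓Quaternion.imJ_mul]
    have hK : (fun y => ((scq (f y) * vecq (grad u y)) : HC).imK)
        = fun y => f y * pd 2 u y := by
      funext y; simp [scq, vecq, grad, ↓Quaternion.imK_mul]
    unfold qpd
    rw [hre, hI, hJ, hK]
    congr 1
    · simp [pd]
    · rw [pd_mul (hfd x hx) (hpud x hx 0) k]
    · rw [pd_mul (hfd x hx) (hpud x hx 1) k]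
    · rw [pd_mul (hfd x hx) (hpud x hx 2) k]
  have part2 : ∀ x ∈ Ω,
      Dq (fun y => scq (f y) * vecq (grad u y)) x
        + (scq (f x) * vecq (grad u x))
            * vecq (fun k => grad f x k * (f x)⁻¹)
      = scq (-lapS g x + (lapS f x * (f x)⁻¹) * g x) := by
    intro x hx
    have hfx := hf0 x hx
    have hgx : g x = f x * u x := by
      simp only [hu_def]; rw [mul_comm (g x), ← mul_assoc, mul_inv_cancel₀ hfx, one_mul]
    have hsymm := pd_comm (huc x hx)
    unfold Dq
    unfold lapS
    rw [L2 x hx 0, L2 x hx 1, L2 x hx 2, hgx]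
    apply Quaternion.ext <;>
      simp only [Quaternion.re_add, Quaternion.imI_add, Quaternion.imJ_add, Quaternion.imK_add, Quaternion.re_sub, Quaternion.imI_sub, Quaternion.imJ_sub, Quaternion.imK_sub, Quaternion.re_mul, Quaternion.imI_mul, Quaternion.imJ_mul, Quaternion.imK_mul] <;>
      rw [hF x hx 0, hF x hx 1, hF x hx 2] <;>
      simp [e1, e2, e3, scq, vecq, grad, ↓Quaternion.re_mul, ↓Quaternion.imI_mul,
        ↓Quaternion.imJ_mul, ↓Quaternion.imK_mul, QuaternionAlgebra.re_mul,
        QuaternionAlgebra.imI_mul, QuaternionAlgebra.imJ_mul, QuaternionAlgebra.imK_mul,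
        ↓Quaternion.re_add, ↓Quaternion.imI_add, ↓Quaternion.imJ_add, ↓Quaternion.imK_add, ↓Quaternion.re_sub, ↓Quaternion.imI_sub, ↓Quaternion.imJ_sub, ↓Quaternion.imK_sub] <;>
      field_simp <;>
      (try rw [hsymm 1 0]) <;> (try rw [hsymm 2 0]) <;> (try rw [hsymm 2 1]) <;>
      ring
  refine ⟨?_, part2, ?_⟩
  · intro x hx
    have hfx := hf0 x hx
    have h1 := L1 x hx
    apply Quaternion.ext <;>
      simp [scq, vecq, grad, ↓Quaternion.re_mul, ↓Quaternion.imI_mul,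
        ↓Quaternion.imJ_mul, ↓Quaternion.imK_mul, h1 0, h1 1, h1 2, hu_def,
        ↓Quaternion.re_add, ↓Quaternion.imI_add, ↓Quaternion.imJ_add, ↓Quaternion.imK_add, ↓Quaternion.re_sub, ↓Quaternion.imI_sub, ↓Quaternion.imJ_sub, ↓Quaternion.imK_sub] <;>
      field_simp <;> ring
  · intro hsol x hx
    rw [part2 x hx, hsol x hx]
    rfl
end
end
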